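/- arXiv:1906.02186 — 5 statements merged into one kernel-verified Lean document; each statement's English description precedes it below -/
import Mathlib

section
/- Let d ≥ 3 and let B̄_R(y₀) ⊆ ℝ^d be a closed ball (of radius R, center y₀) containing two points x₀ and −x₀ with |x₀| = 1/2. Then there exists a vector e ∈ ℝ^d with e ⊥ x₀ and |e| = 1/2 such that the set 𝒞(x₀, e) := closure of the convex hull of the union, over all vectors f orthogonal to span{x₀, e}, of the sets C(x₀, e, f) := convex hull of {e} ∪ {u ∈ span{x₀, f} : |u| ≤ 1/2}, is contained in B̄_R(y₀). -/
open scoped RealInnerProductSpace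


lemma aux_e {d : ℕ} (hd : 3 ≤ d) (x₀ q : EuclideanSpace ℝ (Fin d)) (hx : x₀ ≠ 0)
    (hq : ⟪x₀, q⟫ = 0) :
    ∃ e : EuclideanSpace ℝ (Fin d), ⟪e, x₀⟫ = 0 ∧ ‖e‖ = 1 / 2 ∧ ⟪e, q⟫ = ‖q‖ / 2 ∧
      q ∈ Submodule.span ℝ ({x₀, e} : Set (EuclideanSpace ℝ (Fin d))) := by
  by_cases hq0 : q = 0
  · -- pick any e orthogonal to x₀
    have h1 : Module.finrank ℝ (Submodule.span ℝ ({x₀} : Set _)) = 1 := finrank_span_singleton hx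
    have h2 := Submodule.finrank_add_finrank_orthogonal (𝕜 := ℝ) (Submodule.span ℝ ({x₀} : Set (EuclideanSpace ℝ (Fin d))))
    rw [h1, finrank_euclideanSpace_fin] at h2
    have hpos : 0 < Module.finrank ℝ (Submodule.span ℝ ({x₀} : Set (EuclideanSpace ℝ (Fin d))))ᗮ := by omega
    have hbot : (Submodule.span ℝ ({x₀} : Set (EuclideanSpace ℝ (Fin d))))ᗮ ≠ ⊥ := by
      intro hb; rw [hb] at hpos; simp at hpos
    obtain ⟨v, hv, hv0⟩ := Submodule.exists_mem_ne_zero_of_ne_bot hbot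
    have hvx : ⟪x₀, v⟫ = 0 := (Submodule.mem_orthogonal _ v).1 hv x₀ (Submodule.mem_span_singleton_self x₀)
    refine ⟨((2 * ‖v‖)⁻¹) • v, ?_, ?_, ?_, ?_⟩
    · rw [real_inner_smul_left, real_inner_comm, hvx, mul_zero]
    · have : ‖v‖ ≠ 0 := norm_ne_zero_iff.2 hv0
      rw [norm_smul, Real.norm_eq_abs, abs_of_nonneg (by positivity)]
      field_simp
    · simp [hq0]
    · simp [hq0]
  · refine ⟨((2 * ‖q‖)⁻¹) • q, ?_, ?_, ?_, ?_⟩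
    · rw [real_inner_smul_left, real_inner_comm, hq, mul_zero]
    · have : ‖q‖ ≠ 0 := norm_ne_zero_iff.2 hq0
      rw [norm_smul, Real.norm_eq_abs, abs_of_nonneg (by positivity)]
      field_simp
    · have : ‖q‖ ≠ 0 := norm_ne_zero_iff.2 hq0
      rw [real_inner_smul_left, real_inner_self_eq_norm_sq]
      field_simp
    · have : ‖q‖ ≠ 0 := norm_ne_zero_iff.2 hq0
      rw [Submodule.mem_span_pair]
      exact ⟨0, 2 * ‖q‖, by rw [smul_smul]; field_simp; simp⟩

set_option maxHeartbeats 1000000 in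
theorem stmt5 {d : ℕ} (hd : 3 ≤ d) (R : ℝ) (y₀ x₀ : EuclideanSpace ℝ (Fin d))
    (hx₀ : ‖x₀‖ = 1 / 2)
    (hmem : x₀ ∈ Metric.closedBall y₀ R) (hmem' : -x₀ ∈ Metric.closedBall y₀ R) :
    ∃ e : EuclideanSpace ℝ (Fin d), ⟪e, x₀⟫ = 0 ∧ ‖e‖ = 1 / 2 ∧
      closure (convexHull ℝ
        (⋃ f ∈ {f : EuclideanSpace ℝ (Fin d) |
            ∀ v ∈ Submodule.span ℝ ({x₀, e} : Set (EuclideanSpace ℝ (Fin d))), ⟪f, v⟫ = 0},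
          convexHull ℝ ({e} ∪
            {u | u ∈ Submodule.span ℝ ({x₀, f} : Set (EuclideanSpace ℝ (Fin d))) ∧ ‖u‖ ≤ 1 / 2})))
        ⊆ Metric.closedBall y₀ R := by
  have hx0 : x₀ ≠ 0 := by intro h; rw [h, norm_zero] at hx₀; norm_num at hx₀
  set p : EuclideanSpace ℝ (Fin d) := (⟪y₀, x₀⟫ / ‖x₀‖ ^ 2) • x₀ with hp
  set q : EuclideanSpace ℝ (Fin d) := y₀ - p with hqdef
  have hnx2 : ‖x₀‖ ^ 2 = 1 / 4 := by rw [hx₀]; norm_num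
  have hqx : ⟪x₀, q⟫ = 0 := by
    rw [hqdef, inner_sub_right, hp, real_inner_smul_right, real_inner_self_eq_norm_sq,
      real_inner_comm]
    field_simp; ring
  obtain ⟨e, hex, hen, heq, hqspan⟩ := aux_e hd x₀ q hx0 hqx
  refine ⟨e, hex, hen, ?_⟩
  -- basic facts
  have hR : 0 ≤ R := le_trans dist_nonneg hmem
  have hRsq : ‖y₀‖ ^ 2 + 1 / 4 + 2 * |⟪x₀, y₀⟫| ≤ R ^ 2 := by
    have h1 : ‖x₀ - y₀‖ ≤ R := by rwa [Metric.mem_closedBall, dist_eq_norm] at hmem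
    have h2 : ‖-x₀ - y₀‖ ≤ R := by rwa [Metric.mem_closedBall, dist_eq_norm] at hmem'
    have h1' : ‖x₀ - y₀‖ ^ 2 ≤ R ^ 2 := by nlinarith [norm_nonneg (x₀ - y₀)]
    have h2' : ‖-x₀ - y₀‖ ^ 2 ≤ R ^ 2 := by nlinarith [norm_nonneg (-x₀ - y₀)]
    rw [norm_sub_sq_real, hnx2] at h1'
    rw [norm_sub_sq_real, norm_neg, hnx2, inner_neg_left] at h2'
    rcases abs_cases (⟪x₀, y₀⟫ : ℝ) with ⟨h, _⟩ | ⟨h, _⟩ <;> rw [h] <;> linarith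
  have hpnorm : ‖p‖ = 2 * |⟪x₀, y₀⟫| := by
    rw [hp, norm_smul, Real.norm_eq_abs, hnx2, abs_div, real_inner_comm y₀ x₀, hx₀]
    rw [abs_of_nonneg (by norm_num : (0:ℝ) ≤ 1/4)]
    field_simp
    ring
  have hysplit : y₀ = p + q := by rw [hqdef]; abel
  -- the key pointwise bound
  have key : ∀ w : EuclideanSpace ℝ (Fin d), ‖w‖ ≤ 1 / 2 → -(‖p‖ / 2) ≤ ⟪w, y₀⟫ →
      w ∈ Metric.closedBall y₀ R := by
    intro w hw hwy
    rw [Metric.mem_closedBall, dist_eq_norm]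
    have hsq : ‖w - y₀‖ ^ 2 ≤ R ^ 2 := by
      rw [norm_sub_sq_real]
      have : ‖w‖ ^ 2 ≤ 1 / 4 := by nlinarith [norm_nonneg w]
      rw [hpnorm] at hwy
      nlinarith
    calc ‖w - y₀‖ = Real.sqrt (‖w - y₀‖ ^ 2) := by rw [Real.sqrt_sq (norm_nonneg _)]
      _ ≤ Real.sqrt (R ^ 2) := Real.sqrt_le_sqrt hsq
      _ = R := Real.sqrt_sq hR
  refine closure_minimal (convexHull_min ?_ (convex_closedBall y₀ R)) Metric.isClosed_closedBall
  intro z hz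
  simp only [Set.mem_iUnion, Set.mem_setOf_eq] at hz
  obtain ⟨f, hf, hz⟩ := hz
  refine convexHull_min ?_ (convex_closedBall y₀ R) hz
  intro w hw
  rcases hw with hw | hw
  · rw [Set.mem_singleton_iff] at hw
    subst hw
    refine key w (le_of_eq hen) ?_
    have hep : ⟪w, p⟫ = 0 := by
      rw [hp, real_inner_smul_right, hex, mul_zero]
    have : ⟪w, y₀⟫ = ‖q‖ / 2 := by
      rw [hysplit, inner_add_right, hep, heq, zero_add]
    rw [this]
    have := norm_nonneg p
    have := norm_nonneg q
    linarith
  · obtain ⟨hwspan, hwnorm⟩ := hw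
    refine key w hwnorm ?_
    -- w ⊥ q since w ∈ span {x₀, f}, x₀ ⊥ q, f ⊥ q
    have hfq : ⟪f, q⟫ = 0 := hf q hqspan
    obtain ⟨a, b, hab⟩ := Submodule.mem_span_pair.1 hwspan
    have hwq : ⟪w, q⟫ = 0 := by
      rw [← hab, inner_add_left, real_inner_smul_left, real_inner_smul_left,
        hqx, hfq, mul_zero, mul_zero, add_zero]
    have hwy : ⟪w, y₀⟫ = ⟪w, p⟫ := by
      rw [hysplit, inner_add_right, hwq, add_zero]
    rw [hwy]
    have habs : |⟪w, p⟫| ≤ ‖w‖ * ‖p‖ := abs_real_inner_le_norm w p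
    have := norm_nonneg p
    rcases abs_cases (⟪w, p⟫ : ℝ) with ⟨h, _⟩ | ⟨h, _⟩ <;> nlinarith
end

section
/- Let d ≥ 3. There exists a constant A_d > 0, depending only on d, such that for every closed ball B̄ ⊆ ℝ^d that contains two points e₀ and −e₀ with |e₀| = 1/2, one has ∫_{B̄} |u − e₀|^{1−d} |u + e₀|^{1−d} du ≥ A_d. -/
open MeasureTheory Metric

set_option maxHeartbeats 2000000

private lemma meas_aux {d : ℕ} (c : EuclideanSpace ℝ (Fin d)) {s : ℝ} (hs : s ≠ 0) :
    Measurable (fun u : EuclideanSpace ℝ (Fin d) => ‖u - c‖ ^ s) := by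
  have hn : Measurable fun u : EuclideanSpace ℝ (Fin d) => ‖u - c‖ :=
    (measurable_id.sub_const c).norm
  have h : (fun u : EuclideanSpace ℝ (Fin d) => ‖u - c‖ ^ s)
      = fun u => if ‖u - c‖ = 0 then 0 else Real.exp (Real.log ‖u - c‖ * s) := by
    funext u
    rcases eq_or_ne ‖u - c‖ 0 with h | h
    · simp [h, Real.zero_rpow hs]
    · rw [if_neg h, Real.rpow_def_of_pos (lt_of_le_of_ne (norm_nonneg _) (Ne.symm h))]
  rw [h]
  exact Measurable.ite (hn (measurableSet_singleton 0)) measurable_const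
    ((Real.measurable_log.comp hn).mul_const s).exp

/-- Integrability of the Riesz-type kernel `‖u - c‖ ^ (1 - d)` on a closed ball around `c`. -/
private lemma int_aux {d : ℕ} (hd : 3 ≤ d) (c : EuclideanSpace ℝ (Fin d)) {r : ℝ} (hr : 0 < r) :
    IntegrableOn (fun u : EuclideanSpace ℝ (Fin d) => ‖u - c‖ ^ ((1 : ℝ) - d))
      (Metric.closedBall c r) := by
  haveI : Nonempty (Fin d) := ⟨⟨0, by omega⟩⟩
  haveI : Nontrivial (EuclideanSpace ℝ (Fin d)) := inferInstance
  have hd3 : (3 : ℝ) ≤ (d : ℝ) := by exact_mod_cast hd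
  have hsne : ((1 : ℝ) - d) ≠ 0 := by linarith
  have hsle : ((1 : ℝ) - d) ≤ 0 := by linarith
  set f : EuclideanSpace ℝ (Fin d) → ℝ := fun u => ‖u - c‖ ^ ((1 : ℝ) - d) with hf
  have hfm : Measurable f := meas_aux c hsne
  have hfnn : ∀ u, 0 ≤ f u := fun u => Real.rpow_nonneg (norm_nonneg _) _
  set A : ℕ → Set (EuclideanSpace ℝ (Fin d)) :=
    fun n => Metric.closedBall c (r / 2 ^ n) \ Metric.ball c (r / 2 ^ (n + 1)) with hA
  have hAmeas : ∀ n, MeasurableSet (A n) := fun n =>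
    measurableSet_closedBall.diff measurableSet_ball
  have htpos : ∀ n : ℕ, 0 < r / 2 ^ (n + 1) := fun n => by positivity
  have hbound : ∀ n : ℕ, ∀ u ∈ A n, f u ≤ (r / 2 ^ (n + 1)) ^ ((1 : ℝ) - d) := by
    intro n u hu
    have h1 : r / 2 ^ (n + 1) ≤ ‖u - c‖ := by
      have := hu.2
      simp only [Metric.mem_ball, not_lt, dist_eq_norm] at this
      exact this
    exact Real.rpow_le_rpow_of_nonpos (htpos n) h1 hsle
  have hAfin : ∀ n : ℕ, volume (A n) < ⊤ :=
    fun n => lt_of_le_of_lt (measure_mono Set.diff_subset) measure_closedBall_lt_top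
  have hAint : ∀ n, IntegrableOn f (A n) := by
    intro n
    have hconst : IntegrableOn (fun _ => (r / 2 ^ (n + 1)) ^ ((1 : ℝ) - d)) (A n) :=
      integrableOn_const (hAfin n).ne enorm_ne_top
    refine Integrable.mono' hconst (hfm.aestronglyMeasurable) ?_
    filter_upwards [ae_restrict_mem (hAmeas n)] with u hu
    rw [Real.norm_of_nonneg (hfnn u)]
    exact hbound n u hu
  -- volume data
  set V : ℝ := (volume (Metric.ball (0 : EuclideanSpace ℝ (Fin d)) 1)).toReal with hV
  have hVnn : 0 ≤ V := ENNReal.toReal_nonneg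
  have hvol : ∀ n : ℕ, (volume (A n)).toReal ≤ (r / 2 ^ n) ^ d * V := by
    intro n
    have h1 : volume (A n) ≤ volume (Metric.closedBall c (r / 2 ^ n)) :=
      measure_mono Set.diff_subset
    have h2 : volume (Metric.closedBall c (r / 2 ^ n))
        = ENNReal.ofReal ((r / 2 ^ n) ^ Module.finrank ℝ (EuclideanSpace ℝ (Fin d)))
          * volume (Metric.ball (0 : EuclideanSpace ℝ (Fin d)) 1) :=
      Measure.addHaar_closedBall _ _ (by positivity)
    have h3 := ENNReal.toReal_mono
      (by rw [h2]; exact ENNReal.mul_ne_top ENNReal.ofReal_ne_top measure_ball_lt_top.ne) h1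
    rw [h2, ENNReal.toReal_mul, ENNReal.toReal_ofReal (by positivity)] at h3
    rw [finrank_euclideanSpace_fin] at h3
    exact h3
  -- summability
  set K : ℝ := 2 ^ d * V * (r / 2) with hK
  have hterm : ∀ n : ℕ, ∫ u in A n, ‖f u‖ ≤ K * (1 / 2) ^ n := by
    intro n
    set t : ℝ := r / 2 ^ (n + 1) with ht
    have htp : 0 < t := htpos n
    have step1 : ∫ u in A n, ‖f u‖ ≤ t ^ ((1 : ℝ) - d) * (volume (A n)).toReal := by
      have := norm_setIntegral_le_of_norm_le_const (μ := volume) (s := A n) (hAfin n)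
        (C := t ^ ((1 : ℝ) - d)) (f := fun u => ‖f u‖)
        (fun u hu => by rw [norm_norm, Real.norm_of_nonneg (hfnn u)]; exact hbound n u hu)
      calc ∫ u in A n, ‖f u‖ ≤ ‖∫ u in A n, ‖f u‖‖ := le_abs_self _
        _ ≤ _ := this
    have h2t : r / 2 ^ n = 2 * t := by
      rw [ht, pow_succ]; ring
    have step2 : t ^ ((1 : ℝ) - d) * (volume (A n)).toReal
        ≤ t ^ ((1 : ℝ) - d) * ((2 * t) ^ d * V) := by
      refine mul_le_mul_of_nonneg_left ?_ (Real.rpow_nonneg htp.le _)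
      rw [← h2t]; exact hvol n
    have hpowmul : t ^ ((1 : ℝ) - d) * t ^ (d : ℕ) = t := by
      rw [← Real.rpow_natCast t d, ← Real.rpow_add htp]
      norm_num
    have step3 : t ^ ((1 : ℝ) - d) * ((2 * t) ^ d * V) = 2 ^ d * V * t := by
      rw [mul_pow]
      calc t ^ ((1 : ℝ) - d) * (2 ^ d * t ^ d * V)
          = 2 ^ d * V * (t ^ ((1 : ℝ) - d) * t ^ (d : ℕ)) := by ring
        _ = 2 ^ d * V * t := by rw [hpowmul]
    have step4 : t = (r / 2) * (1 / 2) ^ n := by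
      rw [ht, pow_succ]
      simp only [one_div, inv_pow]
      ring
    calc ∫ u in A n, ‖f u‖ ≤ t ^ ((1 : ℝ) - d) * (volume (A n)).toReal := step1
      _ ≤ t ^ ((1 : ℝ) - d) * ((2 * t) ^ d * V) := step2
      _ = 2 ^ d * V * t := step3
      _ = K * (1 / 2) ^ n := by rw [step4, hK]; ring
  have hsummable : Summable fun n : ℕ => ∫ u in A n, ‖f u‖ :=
    Summable.of_nonneg_of_le
      (fun n => integral_nonneg fun u => norm_nonneg _)
      hterm (summable_geometric_two.mul_left K)
  have hiUnion : IntegrableOn f (⋃ n, A n) :=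
    integrableOn_iUnion_of_summable_integral_norm hAint hsummable
  -- the union covers the punctured ball
  have hcover : Metric.closedBall c r \ {c} ⊆ ⋃ n, A n := by
    intro u hu
    obtain ⟨hu1, hu2⟩ := hu
    have htpos' : 0 < dist u c := by
      rw [dist_pos]; exact fun h => hu2 (by simpa using h)
    have hur : dist u c ≤ r := Metric.mem_closedBall.1 hu1
    have hex : ∃ n : ℕ, r / 2 ^ (n + 1) < dist u c := by
      obtain ⟨n, hn⟩ := pow_unbounded_of_one_lt (r / dist u c) (one_lt_two (α := ℝ))
      refine ⟨n, ?_⟩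
      have h2 : (2 : ℝ) ^ n ≤ 2 ^ (n + 1) := by
        apply pow_le_pow_right₀ one_le_two (Nat.le_succ n)
      have : r / dist u c < 2 ^ (n + 1) := lt_of_lt_of_le hn h2
      rw [div_lt_iff₀ htpos'] at this
      rw [div_lt_iff₀ (by positivity)]
      linarith
    set n₀ := Nat.find hex with hn₀
    have hspec : r / 2 ^ (n₀ + 1) < dist u c := Nat.find_spec hex
    have hup : dist u c ≤ r / 2 ^ n₀ := by
      rcases Nat.eq_zero_or_pos n₀ with h0 | h0
      · rw [h0]; simpa using hur
      · obtain ⟨m, hm⟩ := Nat.exists_eq_succ_of_ne_zero h0.ne'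
        have hmlt : m < n₀ := by omega
        have := Nat.find_min hex hmlt
        push_neg at this
        rw [hm]
        exact this
    refine Set.mem_iUnion.2 ⟨n₀, ?_, ?_⟩
    · exact Metric.mem_closedBall.2 hup
    · simp only [Metric.mem_ball, not_lt]
      exact hspec.le
  have hpunct : IntegrableOn f (Metric.closedBall c r \ {c}) :=
    hiUnion.mono_set hcover
  have hsing : IntegrableOn f ({c} : Set (EuclideanSpace ℝ (Fin d))) := by
    rw [IntegrableOn, Measure.restrict_eq_zero.2 (measure_singleton c)]
    exact integrable_zero_measure
  have := hpunct.union hsing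
  rw [Set.diff_union_self] at this
  exact this.mono_set Set.subset_union_left

theorem stmt8 {d : ℕ} (hd : 3 ≤ d) :
    ∃ A : ℝ, 0 < A ∧
      ∀ (y₀ : EuclideanSpace ℝ (Fin d)) (R : ℝ), 0 < R →
        ∀ e₀ : EuclideanSpace ℝ (Fin d), ‖e₀‖ = 1 / 2 →
          e₀ ∈ Metric.closedBall y₀ R → -e₀ ∈ Metric.closedBall y₀ R →
          A ≤ ∫ u in Metric.closedBall y₀ R,
                ‖u - e₀‖ ^ ((1 : ℝ) - d) * ‖u + e₀‖ ^ ((1 : ℝ) - d) := by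
  haveI : Nonempty (Fin d) := ⟨⟨0, by omega⟩⟩
  haveI : Nontrivial (EuclideanSpace ℝ (Fin d)) := inferInstance
  have hd3 : (3 : ℝ) ≤ (d : ℝ) := by exact_mod_cast hd
  have hsne : ((1 : ℝ) - d) ≠ 0 := by linarith
  have hsle : ((1 : ℝ) - d) ≤ 0 := by linarith
  set m : ℝ := ((3 : ℝ) / 2) ^ ((1 : ℝ) - d) * ((3 : ℝ) / 2) ^ ((1 : ℝ) - d) with hm
  have hmpos : 0 < m :=
    mul_pos (Real.rpow_pos_of_pos (by norm_num) _) (Real.rpow_pos_of_pos (by norm_num) _)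
  set W : ℝ := (volume (Metric.closedBall (0 : EuclideanSpace ℝ (Fin d)) (1 / 4))).toReal with hW
  have hWpos : 0 < W := by
    rw [hW]
    refine ENNReal.toReal_pos ?_ measure_closedBall_lt_top.ne
    refine (lt_of_lt_of_le (measure_ball_pos volume _ (by norm_num : (0:ℝ) < 1/4))
      (measure_mono Metric.ball_subset_closedBall)).ne'
  refine ⟨m * W, mul_pos hmpos hWpos, ?_⟩
  intro y₀ R hR e₀ he hmem hmem'
  have : Nontrivial (EuclideanSpace ℝ (Fin d)) := inferInstance
  set f : EuclideanSpace ℝ (Fin d) → ℝ := fun u => ‖u - e₀‖ ^ ((1 : ℝ) - d) * ‖u + e₀‖ ^ ((1 : ℝ) - d) with hf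
  have hfnn : ∀ u, 0 ≤ f u := fun u =>
    mul_nonneg (Real.rpow_nonneg (norm_nonneg _) _) (Real.rpow_nonneg (norm_nonneg _) _)
  have he2 : ‖e₀ + e₀‖ = 1 := by
    rw [← two_smul ℝ e₀, norm_smul, he, Real.norm_ofNat]
    norm_num
  -- Integrability of f on the big ball
  have hfint : IntegrableOn f (Metric.closedBall y₀ R) := by
    set g₁ : EuclideanSpace ℝ (Fin d) → ℝ := fun u => ‖u - e₀‖ ^ ((1 : ℝ) - d) with hg₁
    set g₂ : EuclideanSpace ℝ (Fin d) → ℝ := fun u => ‖u - (-e₀)‖ ^ ((1 : ℝ) - d) with hg₂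
    have hg₁int : IntegrableOn g₁ (Metric.closedBall y₀ R) := by
      refine (int_aux hd e₀ (r := R + dist y₀ e₀) (by positivity)).mono_set ?_
      intro u hu
      rw [Metric.mem_closedBall] at hu ⊢
      calc dist u e₀ ≤ dist u y₀ + dist y₀ e₀ := dist_triangle _ _ _
        _ ≤ R + dist y₀ e₀ := by linarith
    have hg₂int : IntegrableOn g₂ (Metric.closedBall y₀ R) := by
      refine (int_aux hd (-e₀) (r := R + dist y₀ (-e₀)) (by positivity)).mono_set ?_
      intro u hu
      rw [Metric.mem_closedBall] at hu ⊢
      calc dist u (-e₀) ≤ dist u y₀ + dist y₀ (-e₀) := dist_triangle _ _ _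
        _ ≤ R + dist y₀ (-e₀) := by linarith
    set K2 : ℝ := ((1 : ℝ) / 2) ^ ((1 : ℝ) - d) with hK2
    have hK2nn : 0 ≤ K2 := Real.rpow_nonneg (by norm_num) _
    have hdom : ∀ u : EuclideanSpace ℝ (Fin d), ‖f u‖ ≤ K2 * (g₁ u + g₂ u) := by
      intro u
      rw [Real.norm_of_nonneg (hfnn u)]
      set a : ℝ := ‖u - e₀‖ with ha
      set b : ℝ := ‖u + e₀‖ with hb
      have hab : 1 ≤ a + b := by
        have : ‖(u + e₀) - (u - e₀)‖ ≤ b + a := norm_sub_le _ _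
        have he' : (u + e₀) - (u - e₀) = e₀ + e₀ := by abel
        rw [he', he2] at this
        linarith
      have hga : g₁ u = a ^ ((1 : ℝ) - d) := rfl
      have hgb : g₂ u = b ^ ((1 : ℝ) - d) := by
        simp only [hg₂, sub_neg_eq_add, hb]
      have hannn : 0 ≤ a ^ ((1 : ℝ) - d) := Real.rpow_nonneg (norm_nonneg _) _
      have hbnnn : 0 ≤ b ^ ((1 : ℝ) - d) := Real.rpow_nonneg (norm_nonneg _) _
      rcases le_total a b with hcase | hcase
      · have hb2 : (1 : ℝ) / 2 ≤ b := by linarith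
        have h1 : b ^ ((1 : ℝ) - d) ≤ K2 :=
          Real.rpow_le_rpow_of_nonpos (by norm_num) hb2 hsle
        have h2 : a ^ ((1 : ℝ) - d) * b ^ ((1 : ℝ) - d) ≤ a ^ ((1 : ℝ) - d) * K2 :=
          mul_le_mul_of_nonneg_left h1 hannn
        rw [hf, hga, hgb]
        calc ‖u - e₀‖ ^ ((1:ℝ) - d) * ‖u + e₀‖ ^ ((1:ℝ) - d)
            ≤ a ^ ((1 : ℝ) - d) * K2 := h2
          _ ≤ K2 * (a ^ ((1 : ℝ) - d) + b ^ ((1 : ℝ) - d)) := by nlinarith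
      · have ha2 : (1 : ℝ) / 2 ≤ a := by linarith
        have h1 : a ^ ((1 : ℝ) - d) ≤ K2 :=
          Real.rpow_le_rpow_of_nonpos (by norm_num) ha2 hsle
        have h2 : a ^ ((1 : ℝ) - d) * b ^ ((1 : ℝ) - d) ≤ K2 * b ^ ((1 : ℝ) - d) :=
          mul_le_mul_of_nonneg_right h1 hbnnn
        rw [hf, hga, hgb]
        calc ‖u - e₀‖ ^ ((1:ℝ) - d) * ‖u + e₀‖ ^ ((1:ℝ) - d)
            ≤ K2 * b ^ ((1 : ℝ) - d) := h2
          _ ≤ K2 * (a ^ ((1 : ℝ) - d) + b ^ ((1 : ℝ) - d)) := by nlinarith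
    have hfmeas : Measurable f := by
      have h1 : Measurable fun u : EuclideanSpace ℝ (Fin d) => ‖u - e₀‖ ^ ((1 : ℝ) - d) := meas_aux e₀ hsne
      have h2 : Measurable fun u : EuclideanSpace ℝ (Fin d) => ‖u - (-e₀)‖ ^ ((1 : ℝ) - d) := meas_aux (-e₀) hsne
      have : f = fun u => ‖u - e₀‖ ^ ((1:ℝ) - d) * ‖u - (-e₀)‖ ^ ((1:ℝ) - d) := by
        funext u; simp only [hf, sub_neg_eq_add]
      rw [this]
      exact h1.mul h2
    refine Integrable.mono' (((hg₁int.add hg₂int).const_mul K2)) hfmeas.aestronglyMeasurable ?_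
    exact Filter.Eventually.of_forall hdom
  -- Find a small ball inside the big ball, near e₀
  have hDe : dist e₀ y₀ ≤ R := Metric.mem_closedBall.1 hmem
  obtain ⟨p, hp1, hp2⟩ : ∃ p : EuclideanSpace ℝ (Fin d), dist p e₀ ≤ 1 / 4 ∧
      Metric.closedBall p (1 / 4) ⊆ Metric.closedBall y₀ R := by
    have hR2 : 1 / 2 ≤ R := by
      have h1 : dist e₀ (-e₀) ≤ dist e₀ y₀ + dist y₀ (-e₀) := dist_triangle _ _ _
      have h2 : dist y₀ (-e₀) ≤ R := by
        rw [dist_comm]; exact Metric.mem_closedBall.1 hmem'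
      have h3 : dist e₀ (-e₀) = 1 := by
        rw [dist_eq_norm, sub_neg_eq_add, he2]
      linarith
    rcases le_or_gt (dist y₀ e₀) (1 / 4) with hcase | hcase
    · refine ⟨e₀, by simp, ?_⟩
      intro u hu
      rw [Metric.mem_closedBall] at hu ⊢
      calc dist u y₀ ≤ dist u e₀ + dist e₀ y₀ := dist_triangle _ _ _
        _ ≤ 1 / 4 + 1 / 4 := by rw [dist_comm y₀ e₀] at hcase; linarith
        _ ≤ R := by linarith
    · set D : ℝ := dist y₀ e₀ with hD
      have hDpos : 0 < D := by linarith
      have hnD : ‖y₀ - e₀‖ = D := by rw [hD, dist_eq_norm]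
      refine ⟨e₀ + ((1 / 4) / D) • (y₀ - e₀), ?_, ?_⟩
      · have h1 : dist (e₀ + ((1 / 4) / D) • (y₀ - e₀)) e₀ = ((1 / 4) / D) * ‖y₀ - e₀‖ := by
          rw [dist_eq_norm, add_sub_cancel_left, norm_smul, Real.norm_of_nonneg (by positivity)]
        rw [h1, hnD, div_mul_cancel₀ _ hDpos.ne']
      · intro u hu
        rw [Metric.mem_closedBall] at hu ⊢
        have hpy : dist (e₀ + ((1 / 4) / D) • (y₀ - e₀)) y₀ = D - 1 / 4 := by
          rw [dist_eq_norm]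
          have heq : e₀ + ((1 / 4) / D) • (y₀ - e₀) - y₀ = (((1 / 4) / D) - 1) • (y₀ - e₀) := by
            rw [sub_smul, one_smul]
            abel
          have h14 : (1 / 4) / D < 1 := by
            rw [div_lt_one hDpos]; linarith
          rw [heq, norm_smul, hnD, Real.norm_eq_abs,
            abs_of_nonpos (by linarith), neg_sub, sub_mul, one_mul,
            div_mul_cancel₀ _ hDpos.ne']
        have hDR : D ≤ R := by rw [hD, dist_comm]; exact hDe
        calc dist u y₀ ≤ dist u (e₀ + ((1 / 4) / D) • (y₀ - e₀))
              + dist (e₀ + ((1 / 4) / D) • (y₀ - e₀)) y₀ := dist_triangle _ _ _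
          _ ≤ 1 / 4 + (D - 1 / 4) := by rw [hpy]; linarith
          _ ≤ R := by linarith
  -- Lower bound on the small punctured ball
  set S : Set (EuclideanSpace ℝ (Fin d)) := Metric.closedBall p (1 / 4) \ {e₀} with hS
  have hSmeas : MeasurableSet S := measurableSet_closedBall.diff (measurableSet_singleton _)
  have hSsub : S ⊆ Metric.closedBall y₀ R := fun u hu => hp2 hu.1
  have hSlb : ∀ u ∈ S, m ≤ f u := by
    intro u hu
    obtain ⟨hu1, hu2⟩ := hu
    have hane : u - e₀ ≠ 0 := sub_ne_zero.2 (by simpa using hu2)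
    have hapos : 0 < ‖u - e₀‖ := norm_pos_iff.2 hane
    have haub : ‖u - e₀‖ ≤ 1 / 2 := by
      have h1 : dist u p ≤ 1 / 4 := Metric.mem_closedBall.1 hu1
      have : dist u e₀ ≤ dist u p + dist p e₀ := dist_triangle _ _ _
      rw [dist_eq_norm] at this
      linarith
    have hbub : ‖u + e₀‖ ≤ 3 / 2 := by
      have heq : u + e₀ = (u - e₀) + (e₀ + e₀) := by abel
      calc ‖u + e₀‖ = ‖(u - e₀) + (e₀ + e₀)‖ := by rw [heq]
        _ ≤ ‖u - e₀‖ + ‖e₀ + e₀‖ := norm_add_le _ _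
        _ ≤ 1 / 2 + 1 := by rw [he2]; linarith
        _ = 3 / 2 := by norm_num
    have hbpos : 0 < ‖u + e₀‖ := by
      have heq : e₀ + e₀ = (u + e₀) - (u - e₀) := by abel
      have h1 : ‖e₀ + e₀‖ ≤ ‖u + e₀‖ + ‖u - e₀‖ := by
        rw [heq]; exact norm_sub_le _ _
      rw [he2] at h1
      linarith
    have h1 : ((3 : ℝ) / 2) ^ ((1 : ℝ) - d) ≤ ‖u - e₀‖ ^ ((1 : ℝ) - d) :=
      Real.rpow_le_rpow_of_nonpos hapos (by linarith) hsle
    have h2 : ((3 : ℝ) / 2) ^ ((1 : ℝ) - d) ≤ ‖u + e₀‖ ^ ((1 : ℝ) - d) :=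
      Real.rpow_le_rpow_of_nonpos hbpos hbub hsle
    have h3 : 0 ≤ ((3 : ℝ) / 2) ^ ((1 : ℝ) - d) := Real.rpow_nonneg (by norm_num) _
    exact mul_le_mul h1 h2 h3 (Real.rpow_nonneg (norm_nonneg _) _)
  have hSvol : (volume S).toReal = W := by
    rw [hS, measure_diff_null (measure_singleton _), hW,
      Measure.addHaar_closedBall_center]
  have hSfin : volume S ≠ ⊤ :=
    (lt_of_le_of_lt (measure_mono Set.diff_subset) measure_closedBall_lt_top).ne
  have hfintS : IntegrableOn f S := hfint.mono_set hSsub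
  have step1 : m * W ≤ ∫ u in S, f u := by
    rw [← hSvol]
    have := setIntegral_ge_of_const_le_real hSmeas hSfin hSlb hfintS
    exact this
  have step2 : ∫ u in S, f u ≤ ∫ u in Metric.closedBall y₀ R, f u := by
    refine setIntegral_mono_set hfint ?_ (HasSubset.Subset.eventuallyLE hSsub)
    exact Filter.Eventually.of_forall hfnn
  exact le_trans step1 step2
end

section
/- Let (X, Σ, μ) be a measure space with μ a finite non-atomic nonnegative measure, let W : X → [0, ∞) belong to L¹(X, μ), and let t ∈ (0, μ(X)). Then inf{∫_E W dμ : E ∈ Σ, μ(E) ≥ μ(X) − t} ≤ (μ(X) − t) · W⋆(t; X; μ). -/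
open MeasureTheory
open scoped ENNReal

/-- The nonincreasing rearrangement of a nonnegative function `f` with respect to a
measure `μ`: `f⋆(t; X; μ) := sup {s > 0 : μ {x : f x ≥ s} ≥ t}`, with `sup ∅ = 0`. -/
noncomputable def rearr {X : Type*} [MeasurableSpace X] (μ : Measure X)
    (f : X → ℝ) (t : ℝ) : ℝ :=
  sSup {s : ℝ | 0 < s ∧ ENNReal.ofReal t ≤ μ {x | s ≤ f x}}

lemma measSmallSubset {X : Type*} [MeasurableSpace X] (μ : Measure X) [IsFiniteMeasure μ]
    (hna : ∀ A : Set X, MeasurableSet A → 0 < μ A →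
      ∃ B ⊆ A, MeasurableSet B ∧ 0 < μ B ∧ μ B < μ A)
    {A : Set X} (hA : MeasurableSet A) (h0 : 0 < μ A) {ε : ℝ≥0∞} (hε : 0 < ε) :
    ∃ C ⊆ A, MeasurableSet C ∧ 0 < μ C ∧ μ C ≤ ε := by
  have key : ∀ n : ℕ, ∃ C ⊆ A, MeasurableSet C ∧ 0 < μ C ∧ μ C ≤ μ A * 2⁻¹ ^ n := by
    intro n
    induction n with
    | zero => exact ⟨A, subset_rfl, hA, h0, by simp⟩
    | succ n ih =>
      obtain ⟨C, hCA, hCm, hC0, hCle⟩ := ih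
      obtain ⟨B, hBC, hBm, hB0, hBlt⟩ := hna C hCm hC0
      rcases le_or_gt (μ B) (μ C / 2) with h | h
      · exact ⟨B, hBC.trans hCA, hBm, hB0,
          h.trans (by
            calc μ C / 2 ≤ μ A * 2⁻¹ ^ n / 2 := by gcongr
              _ = μ A * 2⁻¹ ^ (n + 1) := by
                rw [pow_succ, ← mul_assoc, div_eq_mul_inv])⟩
      · refine ⟨C \ B, (Set.diff_subset).trans hCA, hCm.diff hBm, ?_, ?_⟩
        · rw [measure_diff hBC hBm.nullMeasurableSet (measure_ne_top μ B)]
          exact tsub_pos_of_lt hBlt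
        · rw [measure_diff hBC hBm.nullMeasurableSet (measure_ne_top μ B)]
          calc μ C - μ B ≤ μ C - μ C / 2 := tsub_le_tsub_left h.le _
            _ = μ C / 2 := ENNReal.sub_half (measure_ne_top μ C)
            _ ≤ μ A * 2⁻¹ ^ n / 2 := by gcongr
            _ = μ A * 2⁻¹ ^ (n + 1) := by
                rw [pow_succ, ← mul_assoc, div_eq_mul_inv]
  obtain ⟨n, hn⟩ := ENNReal.exists_inv_two_pow_lt (a := ε / μ A)
    (ENNReal.div_ne_zero.2 ⟨hε.ne', measure_ne_top μ A⟩)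
  obtain ⟨C, hCA, hCm, hC0, hCle⟩ := key n
  refine ⟨C, hCA, hCm, hC0, hCle.trans ?_⟩
  rw [mul_comm]
  exact (ENNReal.mul_lt_of_lt_div hn).le

lemma sierpinski {X : Type*} [MeasurableSpace X] (μ : Measure X) [IsFiniteMeasure μ]
    (hna : ∀ A : Set X, MeasurableSet A → 0 < μ A →
      ∃ B ⊆ A, MeasurableSet B ∧ 0 < μ B ∧ μ B < μ A)
    {A : Set X} (hA : MeasurableSet A) {c : ℝ≥0∞} (hc : c ≤ μ A) :
    ∃ B ⊆ A, MeasurableSet B ∧ μ B = c := by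
  have hcT : c ≠ ⊤ := (hc.trans_lt (measure_lt_top μ A)).ne
  set Good : Set X → Prop := fun B => MeasurableSet B ∧ B ⊆ A ∧ μ B ≤ c with hGood
  have step : ∀ B, Good B → ∃ B', Good B' ∧ B ⊆ B' ∧
      ∀ C, MeasurableSet C → C ⊆ A \ B → μ B + μ C ≤ c → μ B + μ C / 2 ≤ μ B' := by
    intro B hB
    set T := {C : Set X | MeasurableSet C ∧ C ⊆ A \ B ∧ μ B + μ C ≤ c} with hT
    set d := sSup (μ '' T) with hd
    have hdle : d ≤ c := by
      apply sSup_le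
      rintro x ⟨C, hC, rfl⟩
      exact le_trans (le_add_self) hC.2.2
    by_cases hd0 : d = 0
    · refine ⟨B, hB, subset_rfl, fun C hCm hCsub hCle => ?_⟩
      have : μ C ≤ d := le_sSup ⟨C, ⟨hCm, hCsub, hCle⟩, rfl⟩
      have : μ C = 0 := le_antisymm (this.trans_eq hd0) zero_le
      simp [this]
    · have hdpos : 0 < d := pos_iff_ne_zero.2 hd0
      have hdT : d ≠ ⊤ := (hdle.trans_lt (lt_of_le_of_lt hc (measure_lt_top μ A))).ne
      have hhalf : d / 2 < d := ENNReal.half_lt_self hd0 hdT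
      obtain ⟨x, ⟨C, hC, rfl⟩, hxd⟩ := lt_sSup_iff.mp hhalf
      obtain ⟨hCm, hCsub, hCle⟩ := hC
      have hdisj : Disjoint B C := Set.disjoint_left.2 fun x hxB hxC => (hCsub hxC).2 hxB
      have hunion : μ (B ∪ C) = μ B + μ C := measure_union hdisj hCm
      refine ⟨B ∪ C, ⟨hB.1.union hCm, Set.union_subset hB.2.1 (hCsub.trans Set.diff_subset),
        by rw [hunion]; exact hCle⟩, Set.subset_union_left, ?_⟩
      intro C' hC'm hC'sub hC'le
      have h1 : μ C' ≤ d := le_sSup ⟨C', ⟨hC'm, hC'sub, hC'le⟩, rfl⟩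
      have h2 : μ C' / 2 ≤ μ C := le_trans (by gcongr) hxd.le
      rw [hunion]
      exact add_le_add_right h2 (μ B)
  classical
  set f : Set X → Set X := fun B => if h : Good B then (step B h).choose else B with hf
  have hfGood : ∀ B, Good B → Good (f B) := by
    intro B h; rw [hf]; simp only [dif_pos h]; exact (step B h).choose_spec.1
  have hfsub : ∀ B, Good B → B ⊆ f B := by
    intro B h; rw [hf]; simp only [dif_pos h]; exact (step B h).choose_spec.2.1
  have hfkey : ∀ B, (h : Good B) → ∀ C, MeasurableSet C → C ⊆ A \ B → μ B + μ C ≤ c →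
      μ B + μ C / 2 ≤ μ (f B) := by
    intro B h; rw [hf]; simp only [dif_pos h]; exact (step B h).choose_spec.2.2
  set g : ℕ → Set X := fun n => f^[n] ∅ with hg
  have hgsucc : ∀ n, g (n + 1) = f (g n) := by
    intro n; rw [hg]; exact Function.iterate_succ_apply' f n ∅
  have hgGood : ∀ n, Good (g n) := by
    intro n
    induction n with
    | zero => exact ⟨MeasurableSet.empty, Set.empty_subset A, by simp [hg]⟩
    | succ n ih => rw [hgsucc]; exact hfGood _ ih
  have hgmono : Monotone g := by
    apply monotone_nat_of_le_succ
    intro n; rw [hgsucc]; exact hfsub _ (hgGood n)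
  set B := ⋃ n, g n with hB
  have hBm : MeasurableSet B := MeasurableSet.iUnion fun n => (hgGood n).1
  have hBA : B ⊆ A := Set.iUnion_subset fun n => (hgGood n).2.1
  have hBμ : μ B = ⨆ n, μ (g n) := hgmono.directed_le.measure_iUnion
  have hBc : μ B ≤ c := by rw [hBμ]; exact iSup_le fun n => (hgGood n).2.2
  refine ⟨B, hBA, hBm, ?_⟩
  by_contra hne
  have hlt : μ B < c := lt_of_le_of_ne hBc hne
  have hdiffpos : 0 < μ (A \ B) := by
    rw [measure_diff hBA hBm.nullMeasurableSet (measure_ne_top μ B)]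
    exact tsub_pos_of_lt (lt_of_lt_of_le hlt hc)
  obtain ⟨C, hCAB, hCm, hC0, hCle⟩ := measSmallSubset μ hna (hA.diff hBm) hdiffpos
    (tsub_pos_of_lt hlt)
  have hstep : ∀ n, μ (g n) + μ C / 2 ≤ μ (g (n + 1)) := by
    intro n
    rw [hgsucc]
    apply hfkey _ (hgGood n) _ hCm
    · exact hCAB.trans (Set.diff_subset_diff_right (Set.subset_iUnion g n))
    · calc μ (g n) + μ C ≤ μ B + (c - μ B) :=
            add_le_add (measure_mono (Set.subset_iUnion g n)) hCle
        _ = c := add_tsub_cancel_of_le hlt.le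
  have hglb : ∀ n : ℕ, (n : ℝ≥0∞) * (μ C / 2) ≤ μ (g n) := by
    intro n
    induction n with
    | zero => simp
    | succ n ih =>
      push_cast
      calc ((n : ℝ≥0∞) + 1) * (μ C / 2) = (n : ℝ≥0∞) * (μ C / 2) + μ C / 2 := by ring
        _ ≤ μ (g n) + μ C / 2 := add_le_add_left ih _
        _ ≤ μ (g (n + 1)) := hstep n
  have hC2pos : (0 : ℝ≥0∞) < μ C / 2 := ENNReal.div_pos hC0.ne' (by norm_num)
  have hC2T : μ C / 2 ≠ ⊤ := by
    exact (ENNReal.div_lt_top (measure_ne_top μ C) (by norm_num)).ne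
  obtain ⟨n, hn⟩ := ENNReal.exists_nat_gt (ENNReal.div_lt_top hcT hC2pos.ne').ne
  have : c < (n : ℝ≥0∞) * (μ C / 2) := by
    rwa [ENNReal.div_lt_iff (Or.inl hC2pos.ne') (Or.inl hC2T)] at hn
  exact absurd ((hglb n).trans ((hgGood n).2.2)) (not_le.2 this)


theorem stmt13 {X : Type*} [MeasurableSpace X] (μ : Measure X) [IsFiniteMeasure μ]
    (hna : ∀ A : Set X, MeasurableSet A → 0 < μ A →
      ∃ B ⊆ A, MeasurableSet B ∧ 0 < μ B ∧ μ B < μ A)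
    (W : X → ℝ) (hWmeas : Measurable W) (hW0 : ∀ x, 0 ≤ W x)
    (hWint : Integrable W μ) (t : ℝ)
    (ht0 : 0 < t) (htX : t < (μ Set.univ).toReal) :
    sInf ((fun E => ∫ x in E, W x ∂μ) ''
        {E : Set X | MeasurableSet E ∧ (μ Set.univ).toReal - t ≤ (μ E).toReal}) ≤
      ((μ Set.univ).toReal - t) * rearr μ W t := by
  set a := (μ Set.univ).toReal - t with hadef
  have ha : 0 < a := sub_pos.2 htX
  set S := ((fun E => ∫ x in E, W x ∂μ) ''
      {E : Set X | MeasurableSet E ∧ (μ Set.univ).toReal - t ≤ (μ E).toReal}) with hS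
  have hSbdd : BddBelow S := by
    refine ⟨0, ?_⟩
    rintro x ⟨E, hE, rfl⟩
    exact setIntegral_nonneg hE.1 fun x _ => hW0 x
  have hreq : rearr μ W t = sSup {s : ℝ | 0 < s ∧ ENNReal.ofReal t ≤ μ {x | s ≤ W x}} := rfl
  set r := rearr μ W t with hrdef
  have hr0 : 0 ≤ r := by
    rw [show (0:ℝ) ≤ r ↔ 0 ≤ sSup {s : ℝ | 0 < s ∧ ENNReal.ofReal t ≤ μ {x | s ≤ W x}} from by rw [hreq]]
    exact Real.sSup_nonneg fun x hx => hx.1.le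
  have hbdd : BddAbove {s : ℝ | 0 < s ∧ ENNReal.ofReal t ≤ μ {x | s ≤ W x}} := by
    refine ⟨(∫ x, W x ∂μ) / t, ?_⟩
    rintro s' ⟨hs'0, hs'⟩
    have hcheb : ENNReal.ofReal s' * μ {x | ENNReal.ofReal s' ≤ ENNReal.ofReal (W x)} ≤
        ∫⁻ x, ENNReal.ofReal (W x) ∂μ :=
      mul_meas_ge_le_lintegral₀ (ENNReal.measurable_ofReal.comp hWmeas).aemeasurable _
    have hseteq : {x | ENNReal.ofReal s' ≤ ENNReal.ofReal (W x)} = {x | s' ≤ W x} := by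
      ext x; simp [ENNReal.ofReal_le_ofReal_iff (hW0 x)]
    rw [hseteq, ← ofReal_integral_eq_lintegral_ofReal hWint
      (Filter.Eventually.of_forall hW0)] at hcheb
    have h2 : ENNReal.ofReal s' * ENNReal.ofReal t ≤ ENNReal.ofReal (∫ x, W x ∂μ) :=
      le_trans (mul_le_mul_right hs' _) hcheb
    rw [← ENNReal.ofReal_mul hs'0.le,
      ENNReal.ofReal_le_ofReal_iff (integral_nonneg hW0)] at h2
    rw [le_div_iff₀ ht0]
    exact h2
  refine le_of_forall_pos_le_add fun ε hε => ?_
  set s := r + ε / a with hsdef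
  have hrs : r < s := by
    rw [hsdef]
    exact lt_add_of_pos_right r (div_pos hε ha)
  have hs0 : 0 < s := lt_of_le_of_lt hr0 hrs
  have hnotmem : s ∉ {s : ℝ | 0 < s ∧ ENNReal.ofReal t ≤ μ {x | s ≤ W x}} := by
    intro hmem
    exact absurd ((le_csSup hbdd hmem).trans_eq hreq.symm) (not_le.2 hrs)
  have hmeas_lt : μ {x | s ≤ W x} < ENNReal.ofReal t := by
    by_contra h
    exact hnotmem ⟨hs0, not_lt.1 h⟩
  have hAm : MeasurableSet {x | W x < s} :=
    measurableSet_lt hWmeas measurable_const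
  have hGem : MeasurableSet {x | s ≤ W x} :=
    measurableSet_le measurable_const hWmeas
  have hcompl : {x | s ≤ W x}ᶜ = {x | W x < s} := by
    ext x; simp [not_le]
  have hAge : ENNReal.ofReal a ≤ μ {x | W x < s} := by
    have h1 : μ {x | W x < s} = μ Set.univ - μ {x | s ≤ W x} := by
      rw [← hcompl, measure_compl hGem (measure_ne_top μ _)]
    have h2 : ENNReal.ofReal a = μ Set.univ - ENNReal.ofReal t := by
      rw [hadef, ENNReal.ofReal_sub _ ht0.le, ENNReal.ofReal_toReal (measure_ne_top μ _)]
    rw [h1, h2]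
    exact tsub_le_tsub_left hmeas_lt.le _
  obtain ⟨B, hBA, hBm, hBμ⟩ := sierpinski μ hna hAm hAge
  have hBtoReal : (μ B).toReal = a := by rw [hBμ, ENNReal.toReal_ofReal ha.le]
  have hmem : ∫ x in B, W x ∂μ ∈ S := ⟨B, ⟨hBm, by rw [hBtoReal]⟩, rfl⟩
  calc sInf S ≤ ∫ x in B, W x ∂μ := csInf_le hSbdd hmem
    _ ≤ ∫ _x in B, s ∂μ := by
        refine setIntegral_mono_on hWint.integrableOn
          (integrableOn_const (measure_lt_top μ B).ne) hBm ?_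
        intro x hx
        exact (hBA hx).le
    _ = a * s := by rw [setIntegral_const, measureReal_def, hBtoReal, smul_eq_mul]
    _ = a * r + ε := by rw [hsdef, mul_add, mul_div_cancel₀ _ ha.ne']
end

section
/- Let d ≥ 3, r > 0, y ∈ ℝ^d, let Q = Q_r(y) := y + [−r, r]^d, and let V : Q → [0, ∞) be Lebesgue measurable. Define Y(x, s) := √(V(x)) · |x − s|^{2−d} · √(V(s)) for x, s ∈ Q with x ≠ s. Then for every t > 0: the function G(s) := Y(·, s)⋆(t; Q) (the nonincreasing rearrangement in the first variable with respect to Lebesgue measure on Q, at level t) is measurable in s, and its rearrangement satisfies (Y⋆)⋆(t; Q) := G⋆(t; Q) ≥ (2r√d)^{2−d} · V⋆(t; Q). -/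
open MeasureTheory

/-- The closed cube `Q_r(y) = y + [-r, r]^d` of side `2r` centered at `y`. -/
def cube {d : ℕ} (r : ℝ) (y : EuclideanSpace ℝ (Fin d)) : Set (EuclideanSpace ℝ (Fin d)) :=
  {x | ∀ i, |x i - y i| ≤ r}


section Aux
variable {X : Type*} [MeasurableSpace X] {μ : Measure X} {f : X → ℝ} {t : ℝ}

lemma rearr_nonneg (μ : Measure X) (f : X → ℝ) (t : ℝ) : 0 ≤ rearr μ f t :=
  Real.sSup_nonneg fun _ hx => hx.1.le

lemma bddAbove_rearrSet [IsFiniteMeasure μ] (hf : Measurable f) (ht : 0 < t) :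
    BddAbove {a : ℝ | 0 < a ∧ ENNReal.ofReal t ≤ μ {x | a ≤ f x}} := by
  have h : ∃ n : ℕ, μ {x | (n : ℝ) ≤ f x} < ENNReal.ofReal t := by
    by_contra hcon
    push_neg at hcon
    have hA : ∀ n : ℕ, NullMeasurableSet {x | (n : ℝ) ≤ f x} μ := fun n =>
      (hf measurableSet_Ici).nullMeasurableSet
    have hanti : Antitone fun n : ℕ => {x | (n : ℝ) ≤ f x} := by
      intro m n hmn x hx
      exact le_trans (Nat.cast_le.mpr hmn : (m:ℝ) ≤ n) hx
    have htend := tendsto_measure_iInter_atTop hA hanti ⟨0, measure_ne_top μ _⟩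
    have hempty : ⋂ n : ℕ, {x | (n : ℝ) ≤ f x} = (∅ : Set X) := by
      ext x
      simp only [Set.mem_iInter, Set.mem_setOf_eq, Set.mem_empty_iff_false, iff_false, not_forall]
      obtain ⟨n, hn⟩ := exists_nat_gt (f x)
      exact ⟨n, not_le.mpr hn⟩
    rw [hempty, measure_empty] at htend
    have := ge_of_tendsto' htend fun n => hcon n
    exact absurd this (by simpa using (ENNReal.ofReal_pos.mpr ht).ne')
  obtain ⟨n, hn⟩ := h
  refine ⟨n, fun a ha => ?_⟩
  by_contra hna
  push_neg at hna
  have hsub : {x | a ≤ f x} ⊆ {x | (n : ℝ) ≤ f x} := fun x hx => le_trans hna.le hx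
  exact absurd (ha.2.trans (measure_mono hsub)) (not_le.mpr hn)

lemma le_rearr [IsFiniteMeasure μ] (hf : Measurable f) (ht : 0 < t) {a : ℝ} (ha : 0 < a)
    (h : ENNReal.ofReal t ≤ μ {x | a ≤ f x}) : a ≤ rearr μ f t :=
  le_csSup (bddAbove_rearrSet hf ht) ⟨ha, h⟩

lemma rearr_le {b : ℝ} (hb : 0 ≤ b)
    (h : ∀ a, 0 < a → ENNReal.ofReal t ≤ μ {x | a ≤ f x} → a ≤ b) : rearr μ f t ≤ b :=
  Real.sSup_le (fun _ hx => h _ hx.1 hx.2) hb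

lemma rearr_eq_iSup [IsFiniteMeasure μ] (hf : Measurable f) (ht : 0 < t) :
    rearr μ f t = ⨆ q : ℚ,
      if 0 < (q : ℝ) ∧ ENNReal.ofReal t ≤ μ {x | (q : ℝ) ≤ f x} then (q : ℝ) else 0 := by
  classical
  set S := {a : ℝ | 0 < a ∧ ENNReal.ofReal t ≤ μ {x | a ≤ f x}} with hS
  have hbdd : BddAbove S := bddAbove_rearrSet hf ht
  set F : ℚ → ℝ := fun q =>
    if 0 < (q : ℝ) ∧ ENNReal.ofReal t ≤ μ {x | (q : ℝ) ≤ f x} then (q : ℝ) else 0 with hF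
  have hFnonneg : ∀ q, 0 ≤ F q := by
    intro q
    by_cases h : 0 < (q : ℝ) ∧ ENNReal.ofReal t ≤ μ {x | (q : ℝ) ≤ f x}
    · rw [hF]; simp only [if_pos h]; exact h.1.le
    · rw [hF]; simp only [if_neg h]; exact le_rfl
  have hbddF : BddAbove (Set.range F) := by
    refine ⟨max (sSup S) 0, ?_⟩
    rintro - ⟨q, rfl⟩
    by_cases h : 0 < (q : ℝ) ∧ ENNReal.ofReal t ≤ μ {x | (q : ℝ) ≤ f x}
    · rw [hF]; simp only [if_pos h]; exact le_max_of_le_left (le_csSup hbdd h)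
    · rw [hF]; simp only [if_neg h]; exact le_max_right _ _
  refine le_antisymm ?_ ?_
  · refine Real.sSup_le ?_ (Real.iSup_nonneg hFnonneg)
    intro a ha
    refine le_of_forall_lt fun b hb => ?_
    obtain ⟨q, hq1, hq2⟩ := exists_rat_btwn (show max b 0 < a from max_lt hb ha.1)
    have hq0 : 0 < (q : ℝ) := lt_of_le_of_lt (le_max_right b 0) hq1
    have hqmem : ENNReal.ofReal t ≤ μ {x | (q : ℝ) ≤ f x} :=
      ha.2.trans (measure_mono fun x hx => le_trans hq2.le hx)
    have hFq : F q = (q : ℝ) := by rw [hF]; simp only [if_pos (And.intro hq0 hqmem)]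
    calc b < (q : ℝ) := lt_of_le_of_lt (le_max_left b 0) hq1
      _ = F q := hFq.symm
      _ ≤ ⨆ q, F q := le_ciSup hbddF q
  · refine ciSup_le fun q => ?_
    by_cases h : 0 < (q : ℝ) ∧ ENNReal.ofReal t ≤ μ {x | (q : ℝ) ≤ f x}
    · rw [hF]; simp only [if_pos h]; exact le_csSup hbdd h
    · rw [hF]; simp only [if_neg h]; exact Real.sSup_nonneg fun _ hx => hx.1.le

end Aux

lemma cube_isClosed {d : ℕ} (r : ℝ) (y : EuclideanSpace ℝ (Fin d)) : IsClosed (cube r y) := by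
  have h : cube r y = ⋂ i, {x : EuclideanSpace ℝ (Fin d) | |x i - y i| ≤ r} := by
    ext x; simp [cube, Set.mem_iInter]
  rw [h]
  refine isClosed_iInter fun i => ?_
  have hc : Continuous fun x : EuclideanSpace ℝ (Fin d) => |x i - y i| :=
    (((EuclideanSpace.proj (𝕜 := ℝ) i).continuous).sub continuous_const).abs
  exact isClosed_le hc continuous_const

lemma dist_le_of_mem_cube {d : ℕ} {r : ℝ} (hr : 0 ≤ r) {y x : EuclideanSpace ℝ (Fin d)}
    (hx : x ∈ cube r y) : dist x y ≤ r * Real.sqrt d := by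
  rw [EuclideanSpace.dist_eq]
  have h1 : ∑ i, dist (x i) (y i) ^ 2 ≤ ∑ _i : Fin d, r ^ 2 := by
    refine Finset.sum_le_sum fun i _ => ?_
    rw [Real.dist_eq]
    exact pow_le_pow_left₀ (abs_nonneg _) (hx i) 2
  calc Real.sqrt (∑ i, dist (x i) (y i) ^ 2) ≤ Real.sqrt (∑ _i : Fin d, r ^ 2) :=
        Real.sqrt_le_sqrt h1
    _ = r * Real.sqrt d := by
        rw [Finset.sum_const, Finset.card_univ, Fintype.card_fin, nsmul_eq_mul,
          Real.sqrt_mul (by positivity) (r ^ 2), Real.sqrt_sq hr]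
        ring

theorem stmt15 {d : ℕ} (hd : 3 ≤ d) (r : ℝ) (hr : 0 < r)
    (y : EuclideanSpace ℝ (Fin d)) (V : EuclideanSpace ℝ (Fin d) → ℝ)
    (hV : Measurable V) (hV0 : ∀ x, 0 ≤ V x) (t : ℝ) (ht : 0 < t) :
    Measurable (fun s => rearr (volume.restrict (cube r y))
        (fun x => Real.sqrt (V x) * ‖x - s‖ ^ ((2 : ℝ) - d) * Real.sqrt (V s)) t) ∧
    (2 * r * Real.sqrt d) ^ ((2 : ℝ) - d) * rearr (volume.restrict (cube r y)) V t ≤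
      rearr (volume.restrict (cube r y))
        (fun s => rearr (volume.restrict (cube r y))
          (fun x => Real.sqrt (V x) * ‖x - s‖ ^ ((2 : ℝ) - d) * Real.sqrt (V s)) t) t := by
  classical
  have hQm : MeasurableSet (cube r y) := (cube_isClosed r y).measurableSet
  set μ : Measure (EuclideanSpace ℝ (Fin d)) := volume.restrict (cube r y) with hμ
  haveI : IsFiniteMeasure μ := by
    constructor
    rw [hμ, Measure.restrict_apply_univ]
    have hsub : cube r y ⊆ Metric.closedBall y (r * Real.sqrt d) := fun x hx =>
      Metric.mem_closedBall.mpr (dist_le_of_mem_cube hr.le hx)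
    exact lt_of_le_of_lt (measure_mono hsub) measure_closedBall_lt_top
  set f : EuclideanSpace ℝ (Fin d) → EuclideanSpace ℝ (Fin d) → ℝ := fun s x =>
    Real.sqrt (V x) * ‖x - s‖ ^ ((2 : ℝ) - d) * Real.sqrt (V s) with hfdef
  have hfmeas : ∀ s, Measurable (f s) := fun s =>
    (hV.sqrt.mul (((continuous_id.sub continuous_const).norm.measurable).pow
      measurable_const)).mul measurable_const
  have hgmeas : Measurable fun p :
      EuclideanSpace ℝ (Fin d) × EuclideanSpace ℝ (Fin d) => f p.1 p.2 :=
    ((hV.comp measurable_snd).sqrt.mul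
      (((continuous_snd.sub continuous_fst).norm.measurable).pow measurable_const)).mul
      (hV.comp measurable_fst).sqrt
  have hμmeas : ∀ q : ℚ, Measurable fun s => μ {x | (q : ℝ) ≤ f s x} := by
    intro q
    have hE : MeasurableSet {p : EuclideanSpace ℝ (Fin d) × EuclideanSpace ℝ (Fin d) |
        (q : ℝ) ≤ f p.1 p.2} := measurableSet_le measurable_const hgmeas
    exact measurable_measure_prodMk_left hE
  have hGmeas : Measurable fun s => rearr μ (f s) t := by
    have heq : (fun s => rearr μ (f s) t) = fun s => ⨆ q : ℚ,
        if 0 < (q : ℝ) ∧ ENNReal.ofReal t ≤ μ {x | (q : ℝ) ≤ f s x} then (q : ℝ) else 0 :=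
      funext fun s => rearr_eq_iSup (hfmeas s) ht
    rw [heq]
    refine Measurable.iSup fun q => ?_
    refine Measurable.ite ?_ measurable_const measurable_const
    have h2 : {s : EuclideanSpace ℝ (Fin d) |
        0 < (q : ℝ) ∧ ENNReal.ofReal t ≤ μ {x | (q : ℝ) ≤ f s x}}
        = {s : EuclideanSpace ℝ (Fin d) | 0 < (q : ℝ)} ∩
          ((fun s => μ {x | (q : ℝ) ≤ f s x}) ⁻¹' Set.Ici (ENNReal.ofReal t)) := rfl
    rw [h2]
    exact (MeasurableSet.const _).inter ((hμmeas q) measurableSet_Ici)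
  have hd2 : (2 : ℝ) - d ≤ 0 := by
    have h3 : (3 : ℝ) ≤ d := by exact_mod_cast hd
    linarith
  have hdpos : (0 : ℝ) < d := by
    have h3 : (3 : ℝ) ≤ d := by exact_mod_cast hd
    linarith
  have hsd : 0 < Real.sqrt d := Real.sqrt_pos.mpr hdpos
  set c := (2 * r * Real.sqrt d) ^ ((2 : ℝ) - d) with hcdef
  have hbase : 0 < 2 * r * Real.sqrt d := by positivity
  have hcpos : 0 < c := Real.rpow_pos_of_pos hbase _
  have hnorm_le : ∀ x ∈ cube r y, ∀ s ∈ cube r y, ‖x - s‖ ≤ 2 * r * Real.sqrt d := by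
    intro x hx s hs
    rw [← dist_eq_norm]
    calc dist x s ≤ dist x y + dist y s := dist_triangle x y s
      _ ≤ r * Real.sqrt d + r * Real.sqrt d := add_le_add (dist_le_of_mem_cube hr.le hx)
          (by rw [dist_comm]; exact dist_le_of_mem_cube hr.le hs)
      _ = 2 * r * Real.sqrt d := by ring
  haveI : NullSingletonClass (volume : Measure (EuclideanSpace ℝ (Fin d))) := by
    haveI : Nontrivial (EuclideanSpace ℝ (Fin d)) := by
      refine ⟨EuclideanSpace.single ⟨0, by omega⟩ (1 : ℝ), 0, fun h => ?_⟩
      have h1 := congrArg (fun v : EuclideanSpace ℝ (Fin d) => v ⟨0, by omega⟩) h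
      simp [EuclideanSpace.single_apply] at h1
    infer_instance
  have key : ∀ a : ℝ, 0 < a → ENNReal.ofReal t ≤ μ {x | a ≤ V x} →
      c * a ≤ rearr μ (fun s => rearr μ (f s) t) t := by
    intro a ha hμa
    refine le_rearr hGmeas ht (by positivity) ?_
    have hsub : {x | a ≤ V x} ∩ cube r y ⊆ {s | c * a ≤ rearr μ (f s) t} ∩ cube r y := by
      rintro s ⟨hVs, hsQ⟩
      refine ⟨?_, hsQ⟩
      refine le_rearr (hfmeas s) ht (by positivity) ?_
      have hsub2 : ({x | a ≤ V x} \ {s}) ∩ cube r y ⊆ {x | c * a ≤ f s x} ∩ cube r y := by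
        rintro x ⟨⟨hVx, hxs⟩, hxQ⟩
        refine ⟨?_, hxQ⟩
        have hxs' : x ≠ s := hxs
        have hnpos : (0 : ℝ) < ‖x - s‖ := norm_pos_iff.mpr (sub_ne_zero.mpr hxs')
        have hpow : c ≤ ‖x - s‖ ^ ((2 : ℝ) - d) :=
          Real.rpow_le_rpow_of_nonpos hnpos (hnorm_le x hxQ s hsQ) hd2
        have h1 : Real.sqrt a ≤ Real.sqrt (V x) := Real.sqrt_le_sqrt hVx
        have h2 : Real.sqrt a ≤ Real.sqrt (V s) := Real.sqrt_le_sqrt hVs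
        have hstep : Real.sqrt a * c * Real.sqrt a ≤ f s x := by
          refine mul_le_mul (mul_le_mul h1 hpow hcpos.le (Real.sqrt_nonneg _)) h2
            (Real.sqrt_nonneg a) ?_
          exact mul_nonneg (Real.sqrt_nonneg _) (Real.rpow_nonneg (norm_nonneg _) _)
        have heqa : Real.sqrt a * c * Real.sqrt a = c * a := by
          rw [mul_comm (Real.sqrt a) c, mul_assoc, Real.mul_self_sqrt ha.le]
        show c * a ≤ f s x
        rw [← heqa]
        exact hstep
      have hμs : μ {s} = 0 := by
        rw [hμ, Measure.restrict_apply' hQm]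
        refine le_antisymm (le_trans (measure_mono Set.inter_subset_left) ?_) zero_le
        rw [measure_singleton]
      calc ENNReal.ofReal t ≤ μ {x | a ≤ V x} := hμa
        _ = μ ({x | a ≤ V x} \ {s}) := (measure_diff_null hμs).symm
        _ = volume (({x | a ≤ V x} \ {s}) ∩ cube r y) := by
            rw [hμ, Measure.restrict_apply' hQm]
        _ ≤ volume ({x | c * a ≤ f s x} ∩ cube r y) := measure_mono hsub2
        _ = μ {x | c * a ≤ f s x} := by rw [hμ, Measure.restrict_apply' hQm]
    calc ENNReal.ofReal t ≤ μ {x | a ≤ V x} := hμa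
      _ = volume ({x | a ≤ V x} ∩ cube r y) := by rw [hμ, Measure.restrict_apply' hQm]
      _ ≤ volume ({s | c * a ≤ rearr μ (f s) t} ∩ cube r y) := measure_mono hsub
      _ = μ {s | c * a ≤ rearr μ (f s) t} := by rw [hμ, Measure.restrict_apply' hQm]
  have h1 : rearr μ V t ≤ rearr μ (fun s => rearr μ (f s) t) t / c := by
    refine rearr_le (div_nonneg (rearr_nonneg _ _ _) hcpos.le) fun a ha hμa => ?_
    rw [le_div_iff₀ hcpos, mul_comm]
    exact key a ha hμa
  have hfinal : c * rearr μ V t ≤ rearr μ (fun s => rearr μ (f s) t) t := by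
    calc c * rearr μ V t ≤ c * (rearr μ (fun s => rearr μ (f s) t) t / c) :=
          mul_le_mul_of_nonneg_left h1 hcpos.le
      _ = rearr μ (fun s => rearr μ (f s) t) t := by
          rw [mul_comm, div_mul_cancel₀ _ hcpos.ne']
  exact ⟨hGmeas, hfinal⟩
end

section
/- Let d ≥ 1, let m > 1 be an integer, θ ∈ (0, 1), and let V ≥ 0 belong to L¹_loc(ℝ^d). For each l ∈ ℤ^d let {D_j(l)}_{j=1}^∞ be a sequence of subsets of the cube Q₁(l) forming a (log_m, θ)-dense system in Q₁(l). For n ∈ ℕ and ξ ∈ m^{−n}·ℤ^d write Q(ξ, n) := Q_{m^{−n}}(ξ), and let Ξ_n(l, j) := {ξ ∈ m^{−n}·ℤ^d : Q(ξ, n) ⊆ D_j(l)}; assume Ξ_n(l, j) ≠ ∅ for every l ∈ ℤ^d, n ∈ ℕ and j ∈ {1, …, n}. Let γ : (0, r₀) → (0, 1) be a nondecreasing function with limsup_{r↓0} r^{−2} γ(r) = ∞, and suppose that for every natural n: lim_{|l|→∞} min_{ξ ∈ ⋃_{j=1}^n Ξ_n(l, j)} V⋆(γ(m^{−n})·mes_d(Q(0,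 n)); Q(ξ, n)) = ∞. Then there exist r₀′ > 0 and a function γ̄ : (0, r₀′) → (0, 1) with limsup_{r↓0} r^{−2} γ̄(r) = ∞ such that for every r ∈ (0, r₀′]: lim_{|y|→∞} V⋆(γ̄(r)·mes_d(Q_r(y)); Q_r(y)) = ∞. -/
open MeasureTheory Filter

/-- A regular parallelepiped: a set of the form `×_{k=1}^d [a_k, b_k]`. -/
def IsRegParallelepiped {d : ℕ} (P : Set (EuclideanSpace ℝ (Fin d))) : Prop :=
  ∃ a b : Fin d → ℝ, P = {x | ∀ i, a i ≤ x i ∧ x i ≤ b i}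

/-- A finite union of regular parallelepipeds. -/
def IsFinUnionRegPar {d : ℕ} (D : Set (EuclideanSpace ℝ (Fin d))) : Prop :=
  ∃ S : Finset (Set (EuclideanSpace ℝ (Fin d))),
    (∀ P ∈ S, IsRegParallelepiped P) ∧ D = ⋃ P ∈ S, P

/-- A `(log_m, θ)`-dense system `{D_n}_{n ≥ 1}` in the cube `Q₁(y)`. -/
def IsLogDenseSystem {d : ℕ} (m : ℕ) (θ : ℝ) (y : EuclideanSpace ℝ (Fin d))
    (D : ℕ → Set (EuclideanSpace ℝ (Fin d))) : Prop :=
  (∀ n, 1 ≤ n → D n ⊆ cube 1 y ∧ IsFinUnionRegPar (D n)) ∧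
  ∀ (z : EuclideanSpace ℝ (Fin d)) (r : ℝ), 0 < r → r < min 1 (1 / (θ * (m : ℝ) ^ 2)) →
    cube r z ⊆ cube 1 y →
    ∃ j : ℕ, 1 ≤ j ∧ (j : ℝ) ≤ Real.logb m (1 / (θ * r)) ∧
      ∃ P, IsRegParallelepiped P ∧ P ⊆ D j ∧
        ∃ s, cube (θ * r) s ⊆ P ∩ cube r z

/-- The embedding of an integer vector `l ∈ ℤ^d` into `ℝ^d`. -/
def ofInt {d : ℕ} (l : Fin d → ℤ) : EuclideanSpace ℝ (Fin d) :=
  WithLp.toLp 2 (fun i => (l i : ℝ))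

/-- The point of the `m`-adic lattice `m^{-n}·ℤ^d` with integer coordinates `k`. -/
noncomputable def latt {d : ℕ} (m n : ℕ) (k : Fin d → ℤ) : EuclideanSpace ℝ (Fin d) :=
  WithLp.toLp 2 (fun i => (k i : ℝ) / (m : ℝ) ^ n)

/-- The `m`-adic cube `Q(ξ, n) = Q_{m^{-n}}(ξ)` with `ξ = latt m n k ∈ m^{-n}·ℤ^d`. -/
noncomputable def adicCube {d : ℕ} (m n : ℕ) (k : Fin d → ℤ) :
    Set (EuclideanSpace ℝ (Fin d)) :=
  cube (((m : ℝ) ^ n)⁻¹) (latt m n k)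

lemma cube_eq_preimage {d : ℕ} (r : ℝ) (y : EuclideanSpace ℝ (Fin d)) :
    cube r y = ⇑(MeasurableEquiv.toLp 2 (Fin d → ℝ)).symm ⁻¹'
      (Set.univ.pi fun i => Set.Icc (y i - r) (y i + r)) := by
  ext x
  simp only [cube, Set.mem_setOf_eq, Set.mem_preimage, Set.mem_pi, Set.mem_univ, true_implies,
    Set.mem_Icc, MeasurableEquiv.coe_toLp_symm]
  constructor
  · intro h i; have := abs_le.1 (h i); constructor <;> linarith [this.1, this.2]
  · intro h i; rw [abs_le]; have := h i; constructor <;> linarith [this.1, this.2]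

lemma volume_cube {d : ℕ} (r : ℝ) (hr : 0 ≤ r) (y : EuclideanSpace ℝ (Fin d)) :
    volume (cube r y) = ENNReal.ofReal ((2 * r) ^ d) := by
  rw [cube_eq_preimage,
    (EuclideanSpace.volume_preserving_symm_measurableEquiv_toLp (Fin d)).measure_preimage
      (MeasurableSet.univ_pi (fun i => measurableSet_Icc)).nullMeasurableSet,
    volume_pi_pi]
  have : ∀ x : Fin d, ENNReal.ofReal (y x + r - (y x - r)) = ENNReal.ofReal (2*r) := by
    intro x; congr 1; ring
  simp only [Real.volume_Icc, this]
  rw [Finset.prod_const, ← ENNReal.ofReal_pow (by linarith)]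
  simp

lemma isCompact_cube {d : ℕ} (r : ℝ) (hr : 0 ≤ r) (y : EuclideanSpace ℝ (Fin d)) :
    IsCompact (cube r y) := by
  apply Metric.isCompact_of_isClosed_isBounded
  · have heq : cube r y = ⋂ i, (fun x : EuclideanSpace ℝ (Fin d) => x i) ⁻¹'
        Set.Icc (y i - r) (y i + r) := by
      ext x
      simp only [cube, Set.mem_setOf_eq, Set.mem_iInter, Set.mem_preimage, Set.mem_Icc, abs_le]
      constructor
      · intro h i; have := h i; constructor <;> linarith [this.1, this.2]
      · intro h i; have := h i; constructor <;> linarith [this.1, this.2]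
    rw [heq]
    exact isClosed_iInter fun i => IsClosed.preimage (EuclideanSpace.proj i).continuous isClosed_Icc
  · apply (Metric.isBounded_closedBall (x := y) (r := Real.sqrt d * r)).subset
    intro x hx
    simp only [Metric.mem_closedBall]
    rw [EuclideanSpace.dist_eq]
    have h1 : ∑ i, dist (x i) (y i) ^ 2 ≤ (d : ℝ) * r ^ 2 := by
      calc ∑ i, dist (x i) (y i) ^ 2 ≤ ∑ _i : Fin d, r ^ 2 := by
            apply Finset.sum_le_sum
            intro i _
            have : dist (x i) (y i) ≤ r := by rw [Real.dist_eq]; exact hx i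
            nlinarith [dist_nonneg (x := x i) (y := y i)]
        _ = (d : ℝ) * r ^ 2 := by simp [Finset.sum_const]
    calc Real.sqrt (∑ i, dist (x i) (y i) ^ 2) ≤ Real.sqrt ((d : ℝ) * r ^ 2) :=
          Real.sqrt_le_sqrt h1
      _ = Real.sqrt d * r := by
          rw [Real.sqrt_mul (by positivity), Real.sqrt_sq hr]

lemma rearr_mono_set {X : Type*} [MeasurableSpace X] {ν : Measure X}
    (V : X → ℝ) (hV0 : ∀ x, 0 ≤ V x)
    {A B : Set X} (hBA : B ⊆ A)
    (hInt : ∫⁻ x in A, ENNReal.ofReal (V x) ∂ν ≠ ⊤)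
    (hVae : AEMeasurable V (ν.restrict A))
    {t : ℝ} (ht : 0 < t) :
    rearr (ν.restrict B) V t ≤ rearr (ν.restrict A) V t := by
  set I := ∫⁻ x in A, ENNReal.ofReal (V x) ∂ν with hI
  set SA := {s : ℝ | 0 < s ∧ ENNReal.ofReal t ≤ (ν.restrict A) {x | s ≤ V x}} with hSA
  set SB := {s : ℝ | 0 < s ∧ ENNReal.ofReal t ≤ (ν.restrict B) {x | s ≤ V x}} with hSB
  have hsub : SB ⊆ SA := by
    rintro s ⟨hs, hms⟩
    exact ⟨hs, hms.trans (Measure.restrict_mono hBA le_rfl _)⟩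
  set s₀ : ℝ := I.toReal / t + 1 with hs₀
  have hs₀pos : 0 < s₀ := by positivity
  have hbdd : BddAbove SA := by
    refine ⟨s₀, ?_⟩
    rintro s ⟨hs, hms⟩
    by_contra hlt
    push_neg at hlt
    have hmono : (ν.restrict A) {x | s ≤ V x} ≤ (ν.restrict A) {x | s₀ ≤ V x} :=
      measure_mono (fun x hx => le_trans hlt.le hx)
    have hmarkov : (ν.restrict A) {x | s₀ ≤ V x} ≤ I / ENNReal.ofReal s₀ := by
      have h1 : {x | s₀ ≤ V x} = {x | ENNReal.ofReal s₀ ≤ ENNReal.ofReal (V x)} := by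
        ext x
        simp [ENNReal.ofReal_le_ofReal_iff (hV0 x)]
      rw [h1]
      exact meas_ge_le_lintegral_div (hVae.ennreal_ofReal)
        (by simp [hs₀pos]) ENNReal.ofReal_ne_top
    have hlt2 : I / ENNReal.ofReal s₀ < ENNReal.ofReal t := by
      rw [ENNReal.div_lt_iff (Or.inl (ENNReal.ofReal_pos.2 hs₀pos).ne') (Or.inl ENNReal.ofReal_ne_top)]
      rw [← ENNReal.ofReal_mul ht.le]
      have : t * s₀ = I.toReal + t := by rw [hs₀]; field_simp
      rw [this]
      calc I = ENNReal.ofReal I.toReal := (ENNReal.ofReal_toReal hInt).symm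
        _ < ENNReal.ofReal (I.toReal + t) := by
            rw [ENNReal.ofReal_lt_ofReal_iff (by positivity)]
            linarith [ENNReal.toReal_nonneg (a := I)]
    exact absurd (hms.trans (hmono.trans hmarkov)) (not_le.mpr hlt2)
  rcases Set.eq_empty_or_nonempty SB with hB | hB
  · rw [rearr, ← hSB, hB, Real.sSup_empty]
    exact Real.sSup_nonneg (fun x hx => hx.1.le)
  · exact csSup_le_csSup hbdd hB hsub

set_option maxHeartbeats 1000000 in
theorem stmt17 {d : ℕ} (hd : 1 ≤ d) (m : ℕ) (hm : 1 < m) (θ : ℝ)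
    (hθ0 : 0 < θ) (hθ1 : θ < 1)
    (V : EuclideanSpace ℝ (Fin d) → ℝ) (hVmeas : Measurable V) (hV0 : ∀ x, 0 ≤ V x)
    (hVloc : LocallyIntegrable V)
    (D : (Fin d → ℤ) → ℕ → Set (EuclideanSpace ℝ (Fin d)))
    (hD : ∀ l : Fin d → ℤ, IsLogDenseSystem m θ (ofInt l) (D l))
    (hne : ∀ (l : Fin d → ℤ) (n j : ℕ), 1 ≤ j → j ≤ n →
      ∃ k : Fin d → ℤ, adicCube m n k ⊆ D l j)
    (r₀ : ℝ) (hr₀ : 0 < r₀) (γ : ℝ → ℝ) (hγmono : MonotoneOn γ (Set.Ioo 0 r₀))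
    (hγ : ∀ r ∈ Set.Ioo (0 : ℝ) r₀, γ r ∈ Set.Ioo (0 : ℝ) 1)
    (hγlim : ∀ M : ℝ, ∃ᶠ r in nhdsWithin 0 (Set.Ioi 0), M ≤ γ r / r ^ 2)
    (hmain : ∀ n : ℕ, 1 ≤ n → ∀ M : ℝ,
      ∀ᶠ l in (cofinite : Filter (Fin d → ℤ)),
        ∀ k : Fin d → ℤ, (∃ j : ℕ, 1 ≤ j ∧ j ≤ n ∧ adicCube m n k ⊆ D l j) →
          M ≤ rearr (volume.restrict (adicCube m n k)) V
                (γ (((m : ℝ) ^ n)⁻¹) * (volume (adicCube m n (fun _ : Fin d => (0 : ℤ)))).toReal)) :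
    ∃ r₀' : ℝ, 0 < r₀' ∧ ∃ γ' : ℝ → ℝ,
      (∀ r ∈ Set.Ioo (0 : ℝ) r₀', γ' r ∈ Set.Ioo (0 : ℝ) 1) ∧
      (∀ M : ℝ, ∃ᶠ r in nhdsWithin 0 (Set.Ioi 0), M ≤ γ' r / r ^ 2) ∧
      ∀ r : ℝ, 0 < r → r ≤ r₀' →
        Tendsto (fun y : EuclideanSpace ℝ (Fin d) =>
            rearr (volume.restrict (cube r y)) V (γ' r * (volume (cube r y)).toReal))
          (comap (fun y : EuclideanSpace ℝ (Fin d) => ‖y‖) atTop) atTop := by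
  classical
  have hmR : (1:ℝ) < m := by exact_mod_cast hm
  have hmpos : (0:ℝ) < m := by linarith
  -- choice of adic scale
  have hex : ∀ r : ℝ, ∃ n : ℕ, 2/(θ*r) ≤ (m:ℝ)^n := by
    intro r
    rcases le_or_gt r 0 with hr | hr
    · refine ⟨0, ?_⟩
      have : θ * r ≤ 0 := mul_nonpos_of_nonneg_of_nonpos hθ0.le hr
      have : 2/(θ*r) ≤ 0 := div_nonpos_of_nonneg_of_nonpos (by norm_num) this
      simpa using this.trans (by norm_num)
    · obtain ⟨n, hn⟩ := pow_unbounded_of_one_lt (2/(θ*r)) hmR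
      exact ⟨n, hn.le⟩
  set N : ℝ → ℕ := fun r => Nat.find (hex r) with hN
  set H : ℝ → ℝ := fun r => ((m:ℝ)^(N r))⁻¹ with hHdef
  set γ' : ℝ → ℝ := fun r => γ (H r) * (H r / r)^d with hγ'def
  set ε : ℝ := min (min r₀ (1/2)) (min (1/(θ*(m:ℝ)^2)) 1) with hε
  have hεpos : 0 < ε := by
    apply lt_min (lt_min hr₀ (by norm_num)) (lt_min (by positivity) (by norm_num))
  have hεr₀ : ε ≤ r₀ := le_trans (min_le_left _ _) (min_le_left _ _)
  have hεhalf : ε ≤ 1/2 := le_trans (min_le_left _ _) (min_le_right _ _)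
  have hεθm : ε ≤ 1/(θ*(m:ℝ)^2) := le_trans (min_le_right _ _) (min_le_left _ _)
  have hεone : ε ≤ 1 := le_trans (min_le_right _ _) (min_le_right _ _)
  -- basic facts about H
  have hHpos : ∀ r : ℝ, 0 < H r := by intro r; rw [hHdef]; positivity
  have hHle : ∀ r : ℝ, 0 < r → H r ≤ θ*r/2 := by
    intro r hr
    have hspec : 2/(θ*r) ≤ (m:ℝ)^(N r) := Nat.find_spec (hex r)
    have h2 : (0:ℝ) < 2/(θ*r) := by positivity
    calc H r = ((m:ℝ)^(N r))⁻¹ := rfl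
      _ ≤ (2/(θ*r))⁻¹ := inv_anti₀ h2 hspec
      _ = θ*r/2 := by rw [inv_div]
  have hHlt : ∀ r : ℝ, 0 < r → H r < r := by
    intro r hr
    have := hHle r hr
    nlinarith
  have hN1 : ∀ r : ℝ, 0 < r → θ*r < 2 → 1 ≤ N r := by
    intro r hr hr2
    rcases Nat.eq_zero_or_pos (N r) with h0 | h1
    · exfalso
      have hspec : 2/(θ*r) ≤ (m:ℝ)^(N r) := Nat.find_spec (hex r)
      rw [h0] at hspec
      simp only [pow_zero] at hspec
      have hpos : 0 < θ * r := by positivity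
      rw [div_le_one hpos] at hspec
      linarith
    · exact h1
  have hHge : ∀ r : ℝ, 0 < r → θ*r < 2 → θ*r/(2*m) < H r := by
    intro r hr hr2
    have hn1 := hN1 r hr hr2
    have hmin : ¬ (2/(θ*r) ≤ (m:ℝ)^(N r - 1)) :=
      Nat.find_min (hex r) (by
        have hNfind : Nat.find (hex r) = N r := by rw [hN]
        omega)
    push_neg at hmin
    have hNsucc : (m:ℝ)^(N r) = (m:ℝ)^(N r - 1) * m := by
      have hNr : N r - 1 + 1 = N r := by omega
      conv_lhs => rw [← hNr]
      rw [pow_succ]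
    have h3 : (m:ℝ)^(N r) < 2*m/(θ*r) := by
      rw [hNsucc]
      calc (m:ℝ)^(N r - 1) * m < (2/(θ*r)) * m := by
            apply mul_lt_mul_of_pos_right hmin hmpos
        _ = 2*m/(θ*r) := by ring
    have h4 : (0:ℝ) < 2*m/(θ*r) := by positivity
    calc θ*r/(2*m) = (2*m/(θ*r))⁻¹ := by rw [inv_div]
      _ < ((m:ℝ)^(N r))⁻¹ := inv_strictAnti₀ (by positivity) h3
      _ = H r := rfl
  -- H r ∈ Ioo 0 r₀ for r ∈ Ioo 0 ε
  have hHmem : ∀ r : ℝ, 0 < r → r < ε → H r ∈ Set.Ioo (0:ℝ) r₀ :=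
    fun r hr hrε => ⟨hHpos r, lt_of_lt_of_le (lt_trans (hHlt r hr) hrε) hεr₀⟩
  -- γ' membership
  have hγ'mem : ∀ r : ℝ, 0 < r → r < ε → γ' r ∈ Set.Ioo (0:ℝ) 1 := by
    intro r hr hrε
    have hγH := hγ (H r) (hHmem r hr hrε)
    have hq1 : H r / r ≤ 1 := by
      rw [div_le_one hr]; exact (hHlt r hr).le
    have hq0 : 0 < H r / r := div_pos (hHpos r) hr
    constructor
    · apply mul_pos hγH.1 (pow_pos hq0 d)
    · calc γ (H r) * (H r / r)^d ≤ γ (H r) * 1 := by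
            apply mul_le_mul_of_nonneg_left (pow_le_one₀ hq0.le hq1) hγH.1.le
        _ < 1 := by rw [mul_one]; exact hγH.2
  refine ⟨ε/2, by positivity, γ', ?_, ?_, ?_⟩
  · -- range of γ'
    intro r hr
    exact hγ'mem r hr.1 (lt_of_lt_of_le hr.2 (by linarith))
  · -- frequently large γ' r / r²
    intro M
    set c : ℝ := (θ/(2*m))^d * (θ/(2*m))^2 with hc
    have hcpos : 0 < c := by rw [hc]; positivity
    have hψ : Tendsto (fun ρ : ℝ => (2*m/θ) * ρ) (nhdsWithin 0 (Set.Ioi 0))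
        (nhdsWithin 0 (Set.Ioi 0)) := by
      apply tendsto_nhdsWithin_of_tendsto_nhds_of_eventually_within
      · have h : Tendsto (fun ρ : ℝ => (2*m/θ) * ρ) (nhds 0) (nhds ((2*m/θ) * 0)) :=
          (continuous_const.mul continuous_id).tendsto 0
        simpa using h.mono_left nhdsWithin_le_nhds
      · filter_upwards [self_mem_nhdsWithin] with ρ hρ
        have hρ' : (0:ℝ) < ρ := hρ
        have : (0:ℝ) < (2*m/θ) * ρ := by positivity
        exact this
    apply hψ.frequently
    have hsmall : ∀ᶠ ρ in nhdsWithin (0:ℝ) (Set.Ioi 0), ρ ∈ Set.Ioo 0 (θ/(2*m) * ε) := by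
      have : Set.Ioo (0:ℝ) (θ/(2*m) * ε) ∈ nhdsWithin (0:ℝ) (Set.Ioi 0) :=
        Ioo_mem_nhdsGT_of_mem ⟨le_refl 0, by positivity⟩
      exact eventually_of_mem this (fun ρ hρ => hρ)
    apply ((hγlim (M/c)).and_eventually hsmall).mono
    rintro ρ ⟨hM, hρ0, hρε⟩
    set r : ℝ := (2*m/θ) * ρ with hrdef
    have hrpos : 0 < r := by rw [hrdef]; positivity
    have hrε : r < ε := by
      rw [hrdef]
      have hpos2 : (0:ℝ) < 2*m/θ := by positivity
      calc (2*m/θ) * ρ < (2*m/θ) * (θ/(2*m) * ε) := (mul_lt_mul_iff_right₀ hpos2).mpr hρε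
        _ = ε := by field_simp
    have hρr : ρ = θ*r/(2*m) := by rw [hrdef]; field_simp
    have hθr2 : θ*r < 2 := by
      have : θ * r < θ * 1 := mul_lt_mul_of_pos_left (lt_of_lt_of_le hrε hεone) hθ0
      linarith
    have hρH : ρ ≤ H r := by rw [hρr]; exact (hHge r hrpos hθr2).le
    have hρmem : ρ ∈ Set.Ioo (0:ℝ) r₀ :=
      ⟨hρ0, lt_of_le_of_lt hρH (hHmem r hrpos hrε).2⟩
    have h1 : γ ρ ≤ γ (H r) := hγmono hρmem (hHmem r hrpos hrε) hρH
    have h2 : (θ/(2*m))^d ≤ (H r / r)^d := by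
      apply pow_le_pow_left₀ (by positivity)
      rw [div_le_div_iff₀ (by positivity) hrpos]
      have hthis := hρH
      rw [hρr] at hthis
      rw [div_le_iff₀ (by positivity : (0:ℝ) < 2*(m:ℝ))] at hthis
      linarith
    have hγρpos : 0 < γ ρ := (hγ ρ hρmem).1
    have hMc : M ≤ c * (γ ρ / ρ^2) := by
      rw [div_le_iff₀ hcpos] at hM
      calc M ≤ γ ρ / ρ^2 * c := hM
        _ = c * (γ ρ / ρ^2) := mul_comm _ _
    have hr2 : r^2 = (2*m/θ)^2 * ρ^2 := by rw [hrdef]; ring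
    have h3 : (θ/(2*m))^d * γ ρ ≤ γ' r := by
      have hmm := mul_le_mul h2 h1 hγρpos.le (pow_nonneg (by positivity) d)
      calc (θ/(2*m))^d * γ ρ ≤ (H r / r)^d * γ (H r) := hmm
        _ = γ' r := by simp only [hγ'def]; ring
    have key : c * (γ ρ / ρ^2) ≤ γ' r / r^2 := by
      have heq : c * (γ ρ / ρ^2) = ((θ/(2*m))^d * γ ρ) / r^2 := by
        rw [hc, hr2]
        field_simp
      rw [heq]
      exact (div_le_div_iff_of_pos_right (by positivity)).mpr h3
    calc M ≤ γ ρ / ρ^2 * c := by rw [div_le_iff₀ hcpos] at hM; exact hM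
      _ = c * (γ ρ / ρ^2) := mul_comm _ _
      _ ≤ γ' r / r^2 := key
  · -- main tendsto statement
    intro r hr0 hrle
    have hrε : r < ε := lt_of_le_of_lt hrle (by linarith)
    have hθr2 : θ*r < 2 := by nlinarith [lt_of_lt_of_le hrε hεone]
    rw [tendsto_atTop]
    intro M
    have hn1 : 1 ≤ N r := hN1 r hr0 hθr2
    have hmain' := hmain (N r) hn1 M
    rw [eventually_cofinite] at hmain'
    obtain ⟨R, hR⟩ := (hmain'.image (fun l => ‖(ofInt l : EuclideanSpace ℝ (Fin d))‖)).bddAbove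
    rw [eventually_comap, eventually_atTop]
    refine ⟨R + Real.sqrt d + 1, fun b hb y hy => ?_⟩
    -- the nearest lattice point
    set l : Fin d → ℤ := fun i => round (y i) with hl
    have hyl : ∀ i, |y i - (l i : ℝ)| ≤ 1/2 := fun i => abs_sub_round (y i)
    have hylnorm : dist y (ofInt l) ≤ Real.sqrt d := by
      rw [EuclideanSpace.dist_eq]
      have hbound : ∑ i, dist (y i) ((ofInt l) i) ^ 2 ≤ (d : ℝ) := by
        calc ∑ i, dist (y i) ((ofInt l) i) ^ 2 ≤ ∑ _i : Fin d, (1:ℝ) := by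
              apply Finset.sum_le_sum
              intro i _
              have h1 : dist (y i) ((ofInt l) i) = |y i - (l i : ℝ)| := Real.dist_eq _ _
              rw [h1]
              nlinarith [hyl i, abs_nonneg (y i - (l i : ℝ))]
          _ = (d : ℝ) := by simp
      exact Real.sqrt_le_sqrt hbound
    have hlgood : ∀ k : Fin d → ℤ, (∃ j : ℕ, 1 ≤ j ∧ j ≤ N r ∧ adicCube m (N r) k ⊆ D l j) →
        M ≤ rearr (volume.restrict (adicCube m (N r) k)) V
          (γ (((m : ℝ) ^ (N r))⁻¹) * (volume (adicCube m (N r) (fun _ : Fin d => (0 : ℤ)))).toReal) := by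
      by_contra hbad
      have hRl : ‖(ofInt l : EuclideanSpace ℝ (Fin d))‖ ≤ R :=
        hR (Set.mem_image_of_mem (fun l => ‖(ofInt l : EuclideanSpace ℝ (Fin d))‖) hbad)
      have hy2 : ‖y‖ ≤ R + Real.sqrt d := by
        have hdn : ‖y‖ - ‖(ofInt l : EuclideanSpace ℝ (Fin d))‖ ≤ dist y (ofInt l) := by
          rw [dist_eq_norm]
          exact norm_sub_norm_le _ _
        linarith
      rw [hy] at hy2
      linarith
    -- cube r y sits inside the unit cube around l
    have hsub1 : cube r y ⊆ cube 1 (ofInt l) := by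
      intro x hx i
      have h1 : |x i - y i| ≤ r := hx i
      have h2 := hyl i
      have : |x i - (ofInt l) i| ≤ |x i - y i| + |y i - (l i : ℝ)| := by
        have h4 : x i - (ofInt l) i = (x i - y i) + (y i - (l i : ℝ)) := by
          show x i - (l i : ℝ) = (x i - y i) + (y i - (l i : ℝ))
          ring
        rw [h4]; exact abs_add_le _ _
      have hr12 : r ≤ 1/2 := le_trans hrε.le hεhalf
      linarith
    -- apply the dense system
    have hrmin : r < min 1 (1 / (θ * (m : ℝ) ^ 2)) := by
      apply lt_min (lt_of_lt_of_le hrε hεone) (lt_of_lt_of_le hrε hεθm)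
    obtain ⟨j, hj1, hjlog, P, hPreg, hPD, s, hs⟩ := (hD l).2 y r hr0 hrmin hsub1
    -- j ≤ N r
    have hjN : j ≤ N r := by
      have hx : (0:ℝ) < 1/(θ*r) := by positivity
      have h1 : (m:ℝ)^(j:ℝ) ≤ 1/(θ*r) := (Real.le_logb_iff_rpow_le hmR hx).mp hjlog
      rw [Real.rpow_natCast] at h1
      have h2 : (1:ℝ)/(θ*r) ≤ 2/(θ*r) := by
        have hp : (0:ℝ) < θ*r := by positivity
        rw [div_le_div_iff₀ hp hp]
        nlinarith
      have h3 : (m:ℝ)^j ≤ (m:ℝ)^(N r) := le_trans h1 (le_trans h2 (Nat.find_spec (hex r)))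
      exact (pow_le_pow_iff_right₀ hmR).mp h3
    -- the adic cube inside the found small cube
    set k := (fun i => ⌊s i * (m:ℝ)^(N r)⌋ : Fin d → ℤ) with hk
    have hadic : adicCube m (N r) k ⊆ cube (θ*r) s := by
      intro x hx i
      have hxi : |x i - (k i : ℝ)/(m:ℝ)^(N r)| ≤ ((m:ℝ)^(N r))⁻¹ := hx i
      have hpow : (0:ℝ) < (m:ℝ)^(N r) := by positivity
      have hk1 : (k i : ℝ) ≤ s i * (m:ℝ)^(N r) := Int.floor_le _
      have hk2 : s i * (m:ℝ)^(N r) - 1 < (k i : ℝ) := Int.sub_one_lt_floor _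
      have hd1 : (k i : ℝ)/(m:ℝ)^(N r) ≤ s i := by
        rw [div_le_iff₀ hpow]; exact hk1
      have hd2 : s i - ((m:ℝ)^(N r))⁻¹ < (k i : ℝ)/(m:ℝ)^(N r) := by
        rw [lt_div_iff₀ hpow]
        have : (s i - ((m:ℝ)^(N r))⁻¹) * (m:ℝ)^(N r) = s i * (m:ℝ)^(N r) - 1 := by
          field_simp
        rw [this]; exact hk2
      have hH2 : ((m:ℝ)^(N r))⁻¹ ≤ θ*r/2 := hHle r hr0
      have habs := abs_le.1 hxi
      rw [abs_le]
      constructor <;> nlinarith [habs.1, habs.2]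
    have hsubD : adicCube m (N r) k ⊆ D l j :=
      fun x hx => hPD ((hs (hadic hx)).1)
    have hsubQ : adicCube m (N r) k ⊆ cube r y :=
      fun x hx => (hs (hadic hx)).2
    have hM := hlgood k ⟨j, hj1, hjN, hsubD⟩
    -- volumes
    have hvolA : volume (adicCube m (N r) (fun _ : Fin d => (0:ℤ))) =
        ENNReal.ofReal ((2 * H r)^d) :=
      volume_cube (H r) (hHpos r).le _
    have hvolQ : volume (cube r y) = ENNReal.ofReal ((2*r)^d) := volume_cube r hr0.le y
    have hteq : γ' r * (volume (cube r y)).toReal =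
        γ (((m : ℝ) ^ (N r))⁻¹) * (volume (adicCube m (N r) (fun _ : Fin d => (0:ℤ)))).toReal := by
      rw [hvolA, hvolQ, ENNReal.toReal_ofReal (by positivity), ENNReal.toReal_ofReal (by positivity)]
      have hHr : H r = ((m:ℝ)^(N r))⁻¹ := rfl
      have hpoweq : (H r / r)^d * (2*r)^d = (2 * H r)^d := by
        rw [← mul_pow]
        congr 1
        field_simp
      calc γ' r * (2*r)^d = γ (H r) * ((H r / r)^d * (2*r)^d) := by
            simp only [hγ'def]; ring
        _ = γ (((m : ℝ) ^ (N r))⁻¹) * (2 * H r)^d := by rw [hpoweq, hHr]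
    rw [← hteq] at hM
    -- rearrangement monotonicity
    have htpos : 0 < γ' r * (volume (cube r y)).toReal := by
      have h1 := (hγ'mem r hr0 hrε).1
      rw [hvolQ, ENNReal.toReal_ofReal (by positivity)]
      positivity
    have hIntA : ∫⁻ x in cube r y, ENNReal.ofReal (V x) ≠ ⊤ := by
      have hint : IntegrableOn V (cube r y) volume :=
        hVloc.integrableOn_isCompact (isCompact_cube r hr0.le y)
      have hfin := hint.2
      rw [HasFiniteIntegral] at hfin
      have : ∫⁻ x in cube r y, ENNReal.ofReal (V x) = ∫⁻ x in cube r y, ‖V x‖₊ := by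
        apply lintegral_congr
        intro x
        exact (Real.enorm_eq_ofReal (hV0 x)).symm
      rw [this]
      exact hfin.ne
    calc M ≤ rearr (volume.restrict (adicCube m (N r) k)) V
          (γ' r * (volume (cube r y)).toReal) := hM
      _ ≤ rearr (volume.restrict (cube r y)) V (γ' r * (volume (cube r y)).toReal) :=
          rearr_mono_set V hV0 hsubQ hIntA (hVmeas.aemeasurable.restrict) htpos
end
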